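/- arXiv:2406.07776 — 6 statements merged into one kernel-verified Lean document; each statement's English description precedes it below -/
import Mathlib

section
/- Let G : ℂⁿ → ℝ be continuous, positive, convex, and complex homogeneous, and assume G is continuously differentiable on ℂⁿ∖{0} (as a function of the underlying real variables ℂⁿ ≅ ℝ^{2n}). Then the dual norm F(ξ) = sup{Re(η(ξ)) : η ∈ ℂⁿ, G(η) = 1} is strictly convex; that is, F(ξ₁ + ξ₂) < 2 whenever F(ξ₁) = F(ξ₂) = 1 and ξ₁ ≠ ξ₂. -/
open Complex Filter Asymptotics Topology

noncomputable section

/-- The ℂ-bilinear pairing `η(ξ) = ∑ i, η i * ξ i` on `ℂⁿ`. -/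
def cpair {n : ℕ} (η ξ : Fin n → ℂ) : ℂ := ∑ i, η i * ξ i

/-- `G` is positive: `G η > 0` for every `η ≠ 0`. -/
def IsPositiveFn {n : ℕ} (G : (Fin n → ℂ) → ℝ) : Prop :=
  ∀ η : Fin n → ℂ, η ≠ 0 → 0 < G η

/-- `G` is complex homogeneous: `G (α • η) = |α| * G η`. -/
def IsComplexHomogeneous {n : ℕ} (G : (Fin n → ℂ) → ℝ) : Prop :=
  ∀ (α : ℂ) (η : Fin n → ℂ), G (α • η) = ‖α‖ * G η

/-- `G` is convex (subadditive): `G (η₁ + η₂) ≤ G η₁ + G η₂`. -/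
def IsConvexFn {n : ℕ} (G : (Fin n → ℂ) → ℝ) : Prop :=
  ∀ η₁ η₂ : Fin n → ℂ, G (η₁ + η₂) ≤ G η₁ + G η₂

/-- `G` is strictly convex: it is convex and `G (η₁ + η₂) < 2` whenever
`G η₁ = G η₂ = 1` and `η₁ ≠ η₂`. -/
def IsStrictlyConvexFn {n : ℕ} (G : (Fin n → ℂ) → ℝ) : Prop :=
  IsConvexFn G ∧
    ∀ η₁ η₂ : Fin n → ℂ, G η₁ = 1 → G η₂ = 1 → η₁ ≠ η₂ → G (η₁ + η₂) < 2

/-- The dual norm `F ξ = sup {Re (η(ξ)) : G η = 1}`. -/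
def dualNorm {n : ℕ} (G : (Fin n → ℂ) → ℝ) (ξ : Fin n → ℂ) : ℝ :=
  sSup {r : ℝ | ∃ η : Fin n → ℂ, G η = 1 ∧ r = (cpair η ξ).re}

/-- The dual metric `F (x, ξ) = sup {Re (η(ξ)) : G (x, η) = 1}` of a parametrized
family `G : U × ℂⁿ → ℝ`. -/
def dualMetric {m n : ℕ} (G : (Fin m → ℂ) × (Fin n → ℂ) → ℝ)
    (x : Fin m → ℂ) (ξ : Fin n → ℂ) : ℝ :=
  dualNorm (fun η => G (x, η)) ξ

end

section Aux
variable {n : ℕ}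

lemma cpair_add (a b ξ : Fin n → ℂ) : cpair (a + b) ξ = cpair a ξ + cpair b ξ := by
  simp [cpair, add_mul, Finset.sum_add_distrib]

lemma cpair_neg (a ξ : Fin n → ℂ) : cpair (-a) ξ = - cpair a ξ := by
  simp [cpair, neg_mul]

lemma cpair_real_smul (t : ℝ) (v ξ : Fin n → ℂ) :
    cpair (t • v) ξ = (t : ℂ) * cpair v ξ := by
  simp [cpair, Finset.mul_sum, Pi.smul_apply, Complex.real_smul, mul_assoc]

lemma cpair_add_right (η a b : Fin n → ℂ) : cpair η (a + b) = cpair η a + cpair η b := by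
  simp [cpair, mul_add, Finset.sum_add_distrib]

lemma cpair_single (i : Fin n) (c : ℂ) (ξ : Fin n → ℂ) :
    cpair (Pi.single i c) ξ = c * ξ i := by
  simp [cpair, Pi.single_apply, Finset.sum_ite_eq', ite_mul]

lemma cpair_continuous (ξ : Fin n → ℂ) : Continuous fun η : Fin n → ℂ => (cpair η ξ).re := by
  refine Complex.continuous_re.comp ?_
  exact continuous_finset_sum _ fun i _ => ((continuous_apply i).mul continuous_const)

end Aux


/-- **Royden's criterion, first bullet (Claim 1).** -/
theorem royden_dual_norm_strictly_convex {n : ℕ} (G : (Fin n → ℂ) → ℝ)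
    (hGcont : Continuous G) (hGpos : IsPositiveFn G) (hGconv : IsConvexFn G)
    (hGhom : IsComplexHomogeneous G)
    (hGC1 : ContDiffOn ℝ 1 G {η : Fin n → ℂ | η ≠ 0}) :
    IsStrictlyConvexFn (dualNorm G) := by
  -- basic facts about G
  have hG0 : G 0 = 0 := by
    have := hGhom 0 0
    simpa using this
  have hGnn : ∀ η, 0 ≤ G η := by
    intro η
    by_cases h : η = 0
    · simp [h, hG0]
    · exact (hGpos η h).le
  have hGsmul : ∀ (t : ℝ), 0 ≤ t → ∀ η : Fin n → ℂ, G (t • η) = t * G η := by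
    intro t ht η
    have h1 : (t : ℂ) • η = t • η := Complex.coe_smul t η
    have := hGhom (t : ℂ) η
    rw [h1] at this
    simpa [Complex.norm_real, Real.norm_eq_abs, _root_.abs_of_nonneg ht] using this
  -- lower bound: ∃ c > 0, c * ‖η‖ ≤ G η
  obtain ⟨c, hc, hcG⟩ : ∃ c : ℝ, 0 < c ∧ ∀ η : Fin n → ℂ, c * ‖η‖ ≤ G η := by
    rcases Set.eq_empty_or_nonempty (Metric.sphere (0 : Fin n → ℂ) 1) with hs | hs
    · refine ⟨1, one_pos, fun η => ?_⟩
      have hη : η = 0 := by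
        by_contra h
        have : (‖η‖⁻¹ • η) ∈ Metric.sphere (0 : Fin n → ℂ) 1 := by
          have hn : ‖η‖ ≠ 0 := norm_ne_zero_iff.mpr h
          simp [norm_smul, _root_.abs_of_nonneg (inv_nonneg.mpr (norm_nonneg η)),
            inv_mul_cancel₀ hn]
        rw [hs] at this; exact this
      simp [hη, hG0]
    · obtain ⟨u, hu, hmin⟩ := (isCompact_sphere (0 : Fin n → ℂ) 1).exists_isMinOn hs
        hGcont.continuousOn
      have hu0 : u ≠ 0 := by
        intro h; rw [h] at hu; simp at hu
      refine ⟨G u, hGpos u hu0, fun η => ?_⟩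
      by_cases h : η = 0
      · simp [h, hG0]
      · have hn : (0:ℝ) < ‖η‖ := norm_pos_iff.mpr h
        have hmem : (‖η‖⁻¹ • η) ∈ Metric.sphere (0 : Fin n → ℂ) 1 := by
          simp [norm_smul, _root_.abs_of_nonneg (inv_nonneg.mpr hn.le), inv_mul_cancel₀ hn.ne']
        have h1 : G u ≤ G (‖η‖⁻¹ • η) := hmin hmem
        have h2 : G (‖η‖⁻¹ • η) = ‖η‖⁻¹ * G η := hGsmul _ (inv_nonneg.mpr hn.le) η
        rw [h2] at h1
        calc G u * ‖η‖ ≤ (‖η‖⁻¹ * G η) * ‖η‖ := by nlinarith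
          _ = G η := by field_simp
  -- the level set K and the sets S ξ
  set K : Set (Fin n → ℂ) := {η | G η = 1} with hK
  have hKcpt : IsCompact K := by
    have hclosed : IsClosed K := isClosed_eq hGcont continuous_const
    have hsub : K ⊆ Metric.closedBall 0 c⁻¹ := by
      intro η hη
      have hη1 : G η = 1 := hη
      have h1 : c * ‖η‖ ≤ 1 := by rw [← hη1]; exact hcG η
      have hle : ‖η‖ ≤ c⁻¹ := by
        rw [← mul_le_mul_iff_right₀ hc, mul_inv_cancel₀ hc.ne']; exact h1
      simpa [Metric.mem_closedBall, dist_eq_norm] using hle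
    exact (isCompact_closedBall _ _).of_isClosed_subset hclosed hsub
  have hSeq : ∀ ξ : Fin n → ℂ,
      {r : ℝ | ∃ η : Fin n → ℂ, G η = 1 ∧ r = (cpair η ξ).re}
        = (fun η => (cpair η ξ).re) '' K := by
    intro ξ
    ext r
    constructor
    · rintro ⟨η, h1, h2⟩; exact ⟨η, h1, h2.symm⟩
    · rintro ⟨η, h1, h2⟩; exact ⟨η, h1, h2.symm⟩
  have hScpt : ∀ ξ, IsCompact ((fun η => (cpair η ξ).re) '' K) := fun ξ =>
    hKcpt.image (cpair_continuous ξ)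
  have hSbdd : ∀ ξ, BddAbove ((fun η => (cpair η ξ).re) '' K) := fun ξ =>
    (hScpt ξ).bddAbove
  -- membership bound
  have hle_dual : ∀ ξ : Fin n → ℂ, ∀ η ∈ K, (cpair η ξ).re ≤ dualNorm G ξ := by
    intro ξ η hη
    rw [dualNorm, hSeq ξ]
    exact le_csSup (hSbdd ξ) ⟨η, hη, rfl⟩
  -- nonnegativity of dualNorm
  have hFnn : ∀ ξ, 0 ≤ dualNorm G ξ := by
    intro ξ
    rcases Set.eq_empty_or_nonempty K with hKe | ⟨η, hη⟩
    · rw [dualNorm, hSeq ξ, hKe]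
      simp [Real.sSup_empty]
    · have h1 := hle_dual ξ η hη
      have hmem : (-η) ∈ K := by
        have h3 := hGhom (-1) η
        have h2 : ((-1 : ℂ)) • η = -η := by simp
        rw [h2] at h3
        simp only [norm_neg, norm_one, one_mul] at h3
        show G (-η) = 1
        rw [h3]; exact hη
      have h2 := hle_dual ξ (-η) hmem
      rw [cpair_neg] at h2
      simp at h2
      linarith
  -- the fundamental inequality ℓ_ξ ≤ G when dualNorm G ξ = 1
  have hlin_le : ∀ ξ : Fin n → ℂ, dualNorm G ξ = 1 → ∀ v : Fin n → ℂ,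
      (cpair v ξ).re ≤ G v := by
    intro ξ hξ v
    by_cases h : v = 0
    · simp [h, cpair, hG0]
    · have hg : 0 < G v := hGpos v h
      have hmem : ((G v)⁻¹ • v) ∈ K := by
        rw [hK, Set.mem_setOf_eq, hGsmul _ (inv_nonneg.mpr hg.le), inv_mul_cancel₀ hg.ne']
      have h1 := hle_dual ξ _ hmem
      rw [hξ, cpair_real_smul] at h1
      rw [Complex.re_ofReal_mul] at h1
      nlinarith [mul_le_mul_of_nonneg_left h1 hg.le, mul_inv_cancel₀ hg.ne']
  -- Convexity of dualNorm
  have hconv : IsConvexFn (dualNorm G) := by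
    intro ξ₁ ξ₂
    rw [dualNorm]
    refine Real.sSup_le ?_ (add_nonneg (hFnn _) (hFnn _))
    rintro r ⟨η, hη, rfl⟩
    rw [cpair_add_right]
    have h1 := hle_dual ξ₁ η hη
    have h2 := hle_dual ξ₂ η hη
    simp only [Complex.add_re]
    linarith
  refine ⟨hconv, ?_⟩
  intro ξ₁ ξ₂ h1 h2 hne
  have hle2 : dualNorm G (ξ₁ + ξ₂) ≤ 2 := by
    have := hconv ξ₁ ξ₂; rw [h1, h2] at this; linarith
  rcases lt_or_eq_of_le hle2 with h | h
  · exact h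
  exfalso
  -- K is nonempty since dualNorm G ξ₁ = 1 ≠ 0
  have hKne : K.Nonempty := by
    by_contra hKe
    rw [Set.not_nonempty_iff_eq_empty] at hKe
    have : dualNorm G ξ₁ = 0 := by
      rw [dualNorm, hSeq ξ₁, hKe]; simp [Real.sSup_empty]
    rw [h1] at this; norm_num at this
  -- the sup is attained at some η
  have hSne : ((fun η => (cpair η (ξ₁ + ξ₂)).re) '' K).Nonempty := hKne.image _
  have hmem : sSup ((fun η => (cpair η (ξ₁ + ξ₂)).re) '' K)
      ∈ (fun η => (cpair η (ξ₁ + ξ₂)).re) '' K := (hScpt _).sSup_mem hSne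
  obtain ⟨η, hηK, hηmax⟩ := hmem
  have hd2 : sSup ((fun η => (cpair η (ξ₁ + ξ₂)).re) '' K) = 2 := by
    rw [← hSeq (ξ₁ + ξ₂)]; rw [dualNorm] at h; exact h
  have hηval : (cpair η (ξ₁ + ξ₂)).re = 2 := by
    simpa using hηmax.trans hd2
  -- each piece attains its sup
  have hb1 : (cpair η ξ₁).re ≤ 1 := h1 ▸ hle_dual ξ₁ η hηK
  have hb2 : (cpair η ξ₂).re ≤ 1 := h2 ▸ hle_dual ξ₂ η hηK
  rw [cpair_add_right, Complex.add_re] at hηval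
  have he1 : (cpair η ξ₁).re = 1 := by linarith
  have he2 : (cpair η ξ₂).re = 1 := by linarith
  -- η ≠ 0
  have hη0 : η ≠ 0 := by
    intro hz
    have : G η = 1 := hηK
    rw [hz, hG0] at this; norm_num at this
  -- G differentiable at η
  have hopen : IsOpen {η : Fin n → ℂ | η ≠ 0} := isOpen_ne
  have hdiff : DifferentiableAt ℝ G η := by
    have := (hGC1.differentiableOn one_ne_zero).differentiableAt (hopen.mem_nhds hη0)
    exact this
  set d := fderiv ℝ G η with hd
  have hfd : HasFDerivAt G d η := hdiff.hasFDerivAt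
  -- key: for any ξ with dualNorm G ξ = 1 and (cpair η ξ).re = 1,  d v = (cpair v ξ).re
  have hkey : ∀ ξ : Fin n → ℂ, dualNorm G ξ = 1 → (cpair η ξ).re = 1 →
      ∀ v : Fin n → ℂ, d v = (cpair v ξ).re := by
    intro ξ hξ hηξ v
    -- the path t ↦ η + t • v
    have hpath : HasDerivAt (fun t : ℝ => η + t • v) v 0 := by
      simpa using ((hasDerivAt_id (0:ℝ)).smul_const v).const_add η
    have hcomp : HasDerivAt (fun t : ℝ => G (η + t • v)) (d v) 0 := by
      have h0 : η + (0:ℝ) • v = η := by simp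
      have := hfd
      rw [← h0] at this
      exact this.comp_hasDerivAt 0 hpath
    set f : ℝ → ℝ := fun t => G (η + t • v) - t * (cpair v ξ).re with hf
    have hfd' : HasDerivAt f (d v - (cpair v ξ).re) 0 := by
      have hlin : HasDerivAt (fun t : ℝ => t * (cpair v ξ).re) ((cpair v ξ).re) 0 := by
        simpa using (hasDerivAt_id (0:ℝ)).mul_const ((cpair v ξ).re)
      exact hcomp.sub hlin
    have hmin : IsLocalMin f 0 := by
      refine Filter.Eventually.of_forall fun t => ?_
      have hle : (cpair (η + t • v) ξ).re ≤ G (η + t • v) := hlin_le ξ hξ _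
      rw [cpair_add, cpair_real_smul, Complex.add_re, Complex.re_ofReal_mul, hηξ] at hle
      have hf0 : f 0 = 1 := by simp [hf]; rw [hηK]  -- G η = 1
      rw [hf0]
      simp only [hf]
      linarith
    have := hmin.hasDerivAt_eq_zero hfd'
    linarith [this]
  have hk1 := hkey ξ₁ h1 he1
  have hk2 := hkey ξ₂ h2 he2
  -- hence ξ₁ = ξ₂
  apply hne
  funext i
  have hre : (ξ₁ i).re = (ξ₂ i).re := by
    have := (hk1 (Pi.single i 1)).symm.trans (hk2 (Pi.single i 1))
    rwa [cpair_single, cpair_single, one_mul, one_mul] at this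
  have him : (ξ₁ i).im = (ξ₂ i).im := by
    have := (hk1 (Pi.single i (-Complex.I))).symm.trans (hk2 (Pi.single i (-Complex.I)))
    rw [cpair_single, cpair_single] at this
    simpa [Complex.mul_re] using this
  exact Complex.ext hre him
end

section
/- Let U ⊆ ℂ be a nonempty connected open set and let q₁, q₂ : U → ℂ be holomorphic functions with ∫_U |q₁| dA = ∫_U |q₂| dA = 1 (dA the Lebesgue area measure on ℂ) and q₁ ≠ q₂. Then ∫_U |q₁ + q₂| dA < 2. -/
open MeasureTheory Complex

/-- **Strict convexity of the L¹-norm on holomorphic quadratic differentials** (in a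
coordinate chart).  If `U ⊆ ℂ` is a nonempty connected open set and `q₁, q₂` are
holomorphic on `U` with `∫_U |q₁| dA = ∫_U |q₂| dA = 1` and `q₁ ≠ q₂` on `U`, then
`∫_U |q₁ + q₂| dA < 2`. -/
theorem strict_convexity_L1_holomorphic (U : Set ℂ) (hU : IsOpen U)
    (hne : U.Nonempty) (hconn : IsPreconnected U) (q₁ q₂ : ℂ → ℂ)
    (h₁ : DifferentiableOn ℂ q₁ U) (h₂ : DifferentiableOn ℂ q₂ U)
    (hn₁ : ∫ z in U, ‖q₁ z‖ = 1)
    (hn₂ : ∫ z in U, ‖q₂ z‖ = 1)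
    (hq : ¬ Set.EqOn q₁ q₂ U) :
    ∫ z in U, ‖q₁ z + q₂ z‖ < 2 := by
  have hmeas : MeasurableSet U := hU.measurableSet
  have hc₁ : ContinuousOn q₁ U := h₁.continuousOn
  have hc₂ : ContinuousOn q₂ U := h₂.continuousOn
  have A₁ : AnalyticOnNhd ℂ q₁ U := h₁.analyticOnNhd hU
  have A₂ : AnalyticOnNhd ℂ q₂ U := h₂.analyticOnNhd hU
  have hi₁ : IntegrableOn (fun z => ‖q₁ z‖) U := by
    by_contra h; rw [MeasureTheory.integral_undef h] at hn₁; norm_num at hn₁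
  have hi₂ : IntegrableOn (fun z => ‖q₂ z‖) U := by
    by_contra h; rw [MeasureTheory.integral_undef h] at hn₂; norm_num at hn₂
  have hi₁₂ : IntegrableOn (fun z => ‖q₁ z + q₂ z‖) U := by
    refine Integrable.mono' (hi₁.add hi₂) ?_ ?_
    · exact (continuous_norm.comp_continuousOn (hc₁.add hc₂)).aestronglyMeasurable hmeas
    · filter_upwards with z
      simpa using norm_add_le (q₁ z) (q₂ z)
  -- find a point of strict triangle inequality
  have key : ∃ z₀ ∈ U, ‖q₁ z₀ + q₂ z₀‖ < ‖q₁ z₀‖ + ‖q₂ z₀‖ := by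
    by_contra hcon
    push_neg at hcon
    have hray : ∀ z ∈ U, SameRay ℝ (q₁ z) (q₂ z) := by
      intro z hz
      rw [sameRay_iff_norm_add]
      have h1 : ‖q₁ z + q₂ z‖ ≤ ‖q₁ z‖ + ‖q₂ z‖ :=
        norm_add_le _ _
      have h2 := hcon z hz
      linarith
    -- q₁ is not identically zero
    have hz₁ : ∃ z₁ ∈ U, q₁ z₁ ≠ 0 := by
      by_contra h; push_neg at h
      rw [setIntegral_congr_fun hmeas (g := fun _ => (0:ℝ)) (fun z hz => by simp [h z hz])] at hn₁
      norm_num at hn₁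
    obtain ⟨z₁, hz₁U, hz₁ne⟩ := hz₁
    -- the quotient g = q₂ / q₁ is analytic at z₁ and real-valued near z₁
    set g : ℂ → ℂ := fun z => q₂ z / q₁ z with hg_def
    have hg : AnalyticAt ℂ g z₁ := (A₂ z₁ hz₁U).div (A₁ z₁ hz₁U) hz₁ne
    have hUnhd : U ∈ nhds z₁ := hU.mem_nhds hz₁U
    have hne_ev : ∀ᶠ z in nhds z₁, q₁ z ≠ 0 :=
      ((A₁ z₁ hz₁U).continuousAt).eventually_ne hz₁ne
    have hreal_ev : ∀ᶠ z in nhds z₁, (g z).im = 0 := by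
      filter_upwards [hUnhd, hne_ev] with z hzU hzne
      obtain ⟨r, hr0, hr⟩ := (hray z hzU).exists_nonneg_left hzne
      have hq2 : q₂ z = (r : ℂ) * q₁ z := by rw [← hr, Complex.real_smul]
      have : g z = (r : ℂ) := by
        rw [hg_def]; simp only [hq2, mul_div_assoc, div_self hzne, mul_one]
      simp [this]
    rcases hg.eventually_constant_or_nhds_le_map_nhds with hconst | hopen
    · -- g is locally constant near z₁, with real nonneg value r
      obtain ⟨r, hr0, hr⟩ := (hray z₁ hz₁U).exists_nonneg_left hz₁ne
      have hq2 : q₂ z₁ = (r : ℂ) * q₁ z₁ := by rw [← hr, Complex.real_smul]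
      have hgz₁ : g z₁ = (r : ℂ) := by
        rw [hg_def]; simp only [hq2, mul_div_assoc, div_self hz₁ne, mul_one]
      have hev : q₂ =ᶠ[nhds z₁] fun z => (r : ℂ) * q₁ z := by
        filter_upwards [hconst, hne_ev] with z hzc hzne
        have : g z = (r : ℂ) := hzc.trans hgz₁
        rw [hg_def] at this
        field_simp [hzne] at this
        simpa [mul_comm] using this
      have heqon : Set.EqOn q₂ (fun z => (r : ℂ) * q₁ z) U :=
        A₂.eqOn_of_preconnected_of_eventuallyEq (analyticOnNhd_const.mul A₁) hconn hz₁U hev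
      have hval : (1 : ℝ) = r := by
        have : ∫ z in U, ‖q₂ z‖ = ∫ z in U, r * ‖q₁ z‖ := by
          refine setIntegral_congr_fun hmeas fun z hz => ?_
          rw [heqon hz]
          simp only [norm_mul, Complex.norm_real, Real.norm_eq_abs, _root_.abs_of_nonneg hr0]
        rw [hn₂, MeasureTheory.integral_const_mul, hn₁, mul_one] at this
        exact this
      refine hq fun z hz => ?_
      have := heqon hz
      simp only [← hval] at this
      simpa using this.symm
    · -- open mapping contradiction: image is in ℝ which has empty interior
      have hmem : {w : ℂ | w.im = 0} ∈ nhds (g z₁) := hopen (hreal_ev)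
      obtain ⟨ε, hε, hball⟩ := Metric.mem_nhds_iff.1 hmem
      have h1 : (g z₁ + ((ε / 2 : ℝ) : ℂ) * Complex.I) ∈ Metric.ball (g z₁) ε := by
        simp only [Metric.mem_ball, dist_eq_norm, add_sub_cancel_left]
        rw [norm_mul, Complex.norm_I, mul_one, Complex.norm_real]
        rw [Real.norm_eq_abs, _root_.abs_of_pos (by linarith)]
        linarith
      have h2 := hball h1
      simp only [Set.mem_setOf_eq, Complex.add_im, Complex.mul_im, Complex.I_im, Complex.I_re,
        Complex.ofReal_im, Complex.ofReal_re, mul_one, mul_zero, zero_mul, add_zero] at h2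
      have h3 : (g z₁).im = 0 := hreal_ev.self_of_nhds
      rw [h3, zero_add] at h2
      linarith
  obtain ⟨z₀, hz₀U, hz₀⟩ := key
  set f : ℂ → ℝ := fun z => ‖q₁ z‖ + ‖q₂ z‖ - ‖q₁ z + q₂ z‖
    with hf_def
  have hfint : IntegrableOn f U := (hi₁.add hi₂).sub hi₁₂
  have hfnonneg : ∀ z, 0 ≤ f z := fun z => sub_nonneg.2 (norm_add_le _ _)
  have hfpos : 0 < ∫ z in U, f z := by
    rw [setIntegral_pos_iff_support_of_nonneg_ae (Filter.Eventually.of_forall hfnonneg) hfint]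
    have hfc : ContinuousOn f U :=
      ((continuous_norm.comp_continuousOn hc₁).add
        (continuous_norm.comp_continuousOn hc₂)).sub
        (continuous_norm.comp_continuousOn (hc₁.add hc₂))
    have hfca : ContinuousAt f z₀ := hfc.continuousAt (hU.mem_nhds hz₀U)
    have hfz₀ : 0 < f z₀ := sub_pos.2 hz₀
    have hev : ∀ᶠ z in nhds z₀, 0 < f z ∧ z ∈ U := by
      filter_upwards [(continuousAt_const (y := (0:ℝ))).eventually_lt hfca hfz₀,
        hU.mem_nhds hz₀U] with z h1 h2
      exact ⟨h1, h2⟩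
    obtain ⟨V, hVsub, hVopen, hz₀V⟩ := mem_nhds_iff.1 hev
    refine lt_of_lt_of_le (hVopen.measure_pos volume ⟨z₀, hz₀V⟩) (measure_mono ?_)
    intro z hz
    obtain ⟨h1, h2⟩ := hVsub hz
    exact ⟨ne_of_gt h1, h2⟩
  have hsplit : ∫ z in U, f z =
      (∫ z in U, (‖q₁ z‖ + ‖q₂ z‖)) -
        ∫ z in U, ‖q₁ z + q₂ z‖ :=
    MeasureTheory.integral_sub (hi₁.add hi₂) hi₁₂
  have hadd : ∫ z in U, (‖q₁ z‖ + ‖q₂ z‖) = 2 := by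
    rw [MeasureTheory.integral_add hi₁ hi₂, hn₁, hn₂]; norm_num
  rw [hsplit, hadd] at hfpos
  linarith
end

section
/- Let U ⊆ ℂ be a nonempty connected open set and let α, β : U → ℂ be holomorphic with α not identically zero and ∫_U |β| dA = 1 (dA the Lebesgue area measure; note |conj(α)/|α| · β| = |β|, so the integrand below is defined off the measure-zero zero set of α and is integrable). If Re ∫_U (conj(α(z))/|α(z)|)·β(z) dA(z) = 1, then there exists a real number t ≠ 0 such that α = t·β on U. -/
open MeasureTheory Complex

lemma aux_ae_zero {U : Set ℂ} (hU : IsOpen U) {u : ℂ → ℝ}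
    (hc : ContinuousOn u U) (h : ∀ᵐ z ∂(volume.restrict U), u z = 0) :
    ∀ z ∈ U, u z = 0 := by
  intro z hz
  by_contra hne
  have hct : ContinuousAt u z := hc.continuousAt (hU.mem_nhds hz)
  have hev : ∀ᶠ w in nhds z, w ∈ U ∧ u w ≠ 0 :=
    (Filter.eventually_of_mem (hU.mem_nhds hz) fun _ hw => hw).and (hct.eventually_ne hne)
  obtain ⟨s, hs_sub, hs_open, hzs⟩ := mem_nhds_iff.1 hev
  have hpos : 0 < volume s := hs_open.measure_pos volume ⟨z, hzs⟩
  have h0 : (volume.restrict U) {w | ¬ u w = 0} = 0 := by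
    simpa [ae_iff] using h
  have hle : volume s ≤ (volume.restrict U) {w | ¬ u w = 0} := by
    rw [Measure.restrict_apply₀']
    · exact measure_mono fun w hw => ⟨(hs_sub hw).2, (hs_sub hw).1⟩
    · exact hU.measurableSet.nullMeasurableSet
  rw [h0] at hle
  exact absurd (le_antisymm hle zero_le) hpos.ne'

lemma aux_const_of_real {V : Set ℂ} (hV : IsOpen V) (hVc : IsPreconnected V)
    {g : ℂ → ℂ} (hg : DifferentiableOn ℂ g V) (him : ∀ z ∈ V, (g z).im = 0)
    {z₀ : ℂ} (hz₀ : z₀ ∈ V) : ∀ z ∈ V, g z = g z₀ := by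
  have han : AnalyticOnNhd ℂ g V := hg.analyticOnNhd hV
  rcases han.is_constant_or_isOpen hVc with ⟨w, hw⟩ | hopen
  · intro z hz; rw [hw z hz, hw z₀ hz₀]
  · exfalso
    have h1 : IsOpen (g '' V) := hopen V subset_rfl hV
    obtain ⟨ε, hε, hball⟩ := Metric.isOpen_iff.1 h1 _ ⟨z₀, hz₀, rfl⟩
    have hmem : g z₀ + (ε/2 : ℝ) * Complex.I ∈ Metric.ball (g z₀) ε := by
      simp only [Metric.mem_ball, dist_eq_norm, add_sub_cancel_left]
      rw [norm_mul]
      simp [abs_of_pos hε]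
      linarith
    obtain ⟨w, hwV, hw⟩ := hball hmem
    have h2 := him w hwV
    have h3 := him z₀ hz₀
    rw [hw] at h2
    simp [Complex.add_im, h3] at h2
    linarith


/-- **Equality case in the L¹-duality for holomorphic quadratic differentials** (in a
coordinate chart).  Let `U ⊆ ℂ` be a nonempty connected open set, `α, β` holomorphic on
`U`, `α` not identically zero on `U`, and `∫_U |β| dA = 1`.  If
`Re ∫_U (conj α / |α|) · β dA = 1`, then `α = t · β` on `U` for some real `t ≠ 0`.
(The integrand `conj α / |α| · β` takes the junk value `0` on the measure-zero zero set
of `α`, matching the convention that it is defined off that set.) -/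
theorem L1_duality_equality_case (U : Set ℂ) (hU : IsOpen U)
    (hne : U.Nonempty) (hconn : IsPreconnected U) (α β : ℂ → ℂ)
    (hα : DifferentiableOn ℂ α U) (hβ : DifferentiableOn ℂ β U)
    (hα0 : ∃ z ∈ U, α z ≠ 0)
    (hnβ : ∫ z in U, ‖β z‖ = 1)
    (hre : (∫ z in U, ((starRingEnd ℂ) (α z) / (‖α z‖ : ℂ)) * β z).re = 1) :
    ∃ t : ℝ, t ≠ 0 ∧ Set.EqOn α (fun z => (t : ℂ) * β z) U := by
  set f : ℂ → ℂ := fun z => (starRingEnd ℂ) (α z) / (‖α z‖ : ℂ) * β z with hfdef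
  -- measurability
  have hαm : AEMeasurable α (volume.restrict U) :=
    hα.continuousOn.aemeasurable hU.measurableSet
  have hβm : AEMeasurable β (volume.restrict U) :=
    hβ.continuousOn.aemeasurable hU.measurableSet
  have hfm : AEStronglyMeasurable f (volume.restrict U) := by
    apply AEMeasurable.aestronglyMeasurable
    exact ((Complex.continuous_conj.measurable.comp_aemeasurable hαm).div
      ((Complex.continuous_ofReal.comp continuous_norm).measurable.comp_aemeasurable
        hαm)).mul hβm
  -- integrability of |β|
  have hβint : Integrable (fun z => (‖β z‖ : ℝ)) (volume.restrict U) := by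
    by_contra h
    rw [integral_undef h] at hnβ; norm_num at hnβ
  -- pointwise bound and equality off zeros
  have habs : ∀ z, α z ≠ 0 → ‖f z‖ = ‖β z‖ := by
    intro z hz
    have h0 : ‖α z‖ ≠ 0 := by simpa using hz
    simp only [hfdef, norm_mul, norm_div, Complex.norm_conj, Complex.norm_real, norm_norm]
    rw [div_self h0, one_mul]
  have hbound : ∀ z, ‖f z‖ ≤ ‖β z‖ := by
    intro z
    by_cases hz : α z = 0
    · simp [hfdef, hz]
    · exact (habs z hz).le
  have hfint : Integrable f (volume.restrict U) :=
    hβint.mono hfm (Filter.Eventually.of_forall fun z => by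
      simpa using hbound z)
  -- Re f = |β| a.e.
  have hreint : ∫ z in U, (f z).re = 1 := by
    have h := integral_re (𝕜 := ℂ) hfint
    exact h.trans hre
  have hfintre : Integrable (fun z => (f z).re) (volume.restrict U) := hfint.re
  have hgint : Integrable (fun z => ‖β z‖ - (f z).re) (volume.restrict U) :=
    hβint.sub hfintre
  have hg0 : (fun z => ‖β z‖ - (f z).re) =ᵐ[volume.restrict U] 0 := by
    refine (integral_eq_zero_iff_of_nonneg_ae ?_ hgint).1 ?_
    · exact Filter.Eventually.of_forall fun z => by
        have := (Complex.re_le_norm (f z)).trans (hbound z)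
        simp only [Pi.zero_apply]; linarith
    · rw [integral_sub hβint hfintre, hnβ, hreint]; ring
  -- a.e. the imaginary part of conj α * β vanishes
  have him : ∀ᵐ z ∂(volume.restrict U), ((starRingEnd ℂ) (α z) * β z).im = 0 := by
    filter_upwards [hg0] with z hz
    simp only [Pi.zero_apply] at hz
    by_cases h0 : α z = 0
    · simp [h0]
    · have h1 : (f z).re = ‖f z‖ := by rw [habs z h0]; linarith
      have h2 : (f z).im = 0 := by
        have h3 := Complex.sq_norm (f z)
        rw [Complex.normSq_apply, ← h1] at h3
        have h6 : (f z).im ^ 2 = 0 := by ring_nf at h3 ⊢; linarith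
        exact (pow_eq_zero_iff two_ne_zero).mp h6
      have h4 : (starRingEnd ℂ) (α z) * β z = f z * (‖α z‖ : ℂ) := by
        have h5 : (‖α z‖ : ℂ) ≠ 0 := by
          simpa using h0
        simp only [hfdef]
        rw [div_mul_eq_mul_div, div_mul_cancel₀ _ h5]
      rw [h4, Complex.mul_im]
      simp [h2]
  -- everywhere on U the imaginary part of conj α * β vanishes
  have hUim : ∀ z ∈ U, ((starRingEnd ℂ) (α z) * β z).im = 0 := by
    refine aux_ae_zero hU ?_ him
    exact Complex.continuous_im.comp_continuousOn
      ((Complex.continuous_conj.comp_continuousOn hα.continuousOn).mul hβ.continuousOn)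
  -- set where α ≠ 0
  obtain ⟨z₀, hz₀U, hz₀⟩ := hα0
  set V : Set ℂ := U ∩ α ⁻¹' {0}ᶜ with hVdef
  have hVopen : IsOpen V := hα.continuousOn.isOpen_inter_preimage hU isOpen_compl_singleton
  have hz₀V : z₀ ∈ V := ⟨hz₀U, by simpa using hz₀⟩
  -- g = β/α is real-valued holomorphic near z₀
  obtain ⟨r, hr, hball⟩ := Metric.isOpen_iff.1 hVopen z₀ hz₀V
  set B := Metric.ball z₀ r with hBdef
  have hBV : B ⊆ V := hball
  have hgd : DifferentiableOn ℂ (fun z => β z / α z) B :=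
    (hβ.mono fun w hw => (hBV hw).1).div (hα.mono fun w hw => (hBV hw).1)
      fun w hw => by simpa using (hBV hw).2
  have hgim : ∀ z ∈ B, ((fun z => β z / α z) z).im = 0 := by
    intro z hz
    have h1 := hUim z (hBV hz).1
    have h2 : α z ≠ 0 := by simpa using (hBV hz).2
    rw [Complex.mul_im] at h1
    rw [Complex.div_im]
    simp only [Complex.conj_re, Complex.conj_im] at h1
    have hn : Complex.normSq (α z) ≠ 0 := by simpa using h2
    field_simp
    linarith
  have hz₀B : z₀ ∈ B := Metric.mem_ball_self hr
  have hconst : ∀ z ∈ B, β z / α z = β z₀ / α z₀ := by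
    have := aux_const_of_real Metric.isOpen_ball (convex_ball z₀ r).isPreconnected
      hgd hgim hz₀B
    exact this
  -- identity theorem
  set c : ℂ := β z₀ / α z₀ with hcdef
  have hcim : c.im = 0 := hgim z₀ hz₀B
  have heqU : Set.EqOn β (fun z => c * α z) U := by
    have hβan : AnalyticOnNhd ℂ β U := hβ.analyticOnNhd hU
    have hcan : AnalyticOnNhd ℂ (fun z => c * α z) U :=
      analyticOnNhd_const.mul (hα.analyticOnNhd hU)
    refine hβan.eqOn_of_preconnected_of_eventuallyEq hcan hconn hz₀U ?_
    have hBn : B ∈ nhds z₀ := Metric.ball_mem_nhds z₀ hr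
    filter_upwards [hBn] with w hw
    have h2 : α w ≠ 0 := by simpa using (hBV hw).2
    have := hconst w hw
    rw [div_eq_iff h2] at this
    exact this
  -- c ≠ 0
  have hc0 : c ≠ 0 := by
    intro hc
    have : ∀ z ∈ U, ‖β z‖ = 0 := by
      intro z hz; rw [heqU hz, hc]; simp
    have h7 : ∫ z in U, ‖β z‖ = 0 := by
      rw [setIntegral_congr_fun hU.measurableSet (g := fun _ => (0:ℝ))
        (fun z hz => this z hz)]
      simp
    rw [hnβ] at h7; norm_num at h7
  -- conclude
  refine ⟨(c.re)⁻¹, ?_, ?_⟩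
  · simp only [ne_eq, inv_eq_zero]
    intro h
    apply hc0
    apply Complex.ext <;> simp [h, hcim]
  · intro z hz
    have h8 : (c : ℂ) = (c.re : ℂ) := by
      apply Complex.ext <;> simp [hcim]
    have h9 : (c.re : ℝ) ≠ 0 := fun h => hc0 (by apply Complex.ext <;> simp [h, hcim])
    have hcre : ((c.re : ℝ) : ℂ) ≠ 0 := Complex.ofReal_ne_zero.mpr h9
    have hβz : β z = c * α z := heqU hz
    show α z = (((c.re)⁻¹ : ℝ) : ℂ) * β z
    rw [hβz, Complex.ofReal_inv, ← h8, ← mul_assoc, inv_mul_cancel₀ hc0, one_mul]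
end

section
/- Let W ⊆ ℂ be a connected open set, q₀ : W → ℂ holomorphic and not identically zero, φ : W → ℂ a C^∞ function, and K ⊆ W compact. Then the function f : ℂ → ℝ defined by f(t) = ∫_K |q₀(z) + t·φ(z)| dA(z) is real-differentiable at t = 0 and satisfies f(t) = f(0) + (t/2)·∫_K (conj(q₀)/|q₀|)·φ dA + (conj(t)/2)·∫_K (q₀/|q₀|)·conj(φ) dA + o(|t|) as t → 0 (the integrands are defined off the measure-zero zero set of q₀ and bounded by |φ|, hence integrable on K); equivalently, f(t) = f(0) + Re(t·∫_K (conj(q₀)/|q₀|)·φ dA) + o(|t|). -/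
open MeasureTheory Complex Filter Asymptotics Topology Set

lemma rvl_est_gen (a w : ℂ) :
    |‖a + w‖ - ‖a‖ - (w * (starRingEnd ℂ) a / (‖a‖ : ℂ)).re|
      ≤ 2 * ‖w‖ := by
  have h1 : |‖a + w‖ - ‖a‖| ≤ ‖w‖ := by
    simpa using abs_norm_sub_norm_le (a + w) a
  have h2 : |(w * (starRingEnd ℂ) a / (‖a‖ : ℂ)).re| ≤ ‖w‖ := by
    refine (Complex.abs_re_le_norm _).trans ?_
    rw [norm_div, norm_mul, Complex.norm_conj, Complex.norm_real, Real.norm_eq_abs,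
      _root_.abs_of_nonneg (norm_nonneg a), mul_div_assoc]
    exact mul_le_of_le_one_right (norm_nonneg _) (div_self_le_one _)
  have := abs_sub (‖a + w‖ - ‖a‖)
    ((w * (starRingEnd ℂ) a / (‖a‖ : ℂ)).re)
  linarith

lemma rvl_est_ne (a w : ℂ) (ha : a ≠ 0) :
    |‖a + w‖ - ‖a‖ - (w * (starRingEnd ℂ) a / (‖a‖ : ℂ)).re|
      ≤ ‖w‖ ^ 2 / (2 * ‖a‖) := by
  set x := ‖a‖ with hxdef
  set y := ‖w‖ with hydef
  set s := ‖a + w‖ with hsdef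
  have hx : 0 < x := norm_pos_iff.mpr ha
  have hy0 : 0 ≤ y := norm_nonneg _
  have hs0 : 0 ≤ s := norm_nonneg _
  have hre : (w * (starRingEnd ℂ) a / (x : ℂ)).re = (w * (starRingEnd ℂ) a).re / x :=
    Complex.div_ofReal_re _ _
  set r := (w * (starRingEnd ℂ) a).re / x with hrdef
  have hrx : r * x = (w * (starRingEnd ℂ) a).re := by
    rw [hrdef, div_mul_cancel₀ _ hx.ne']
  have hsq : s ^ 2 = x ^ 2 + 2 * (r * x) + y ^ 2 := by
    have h1 : s ^ 2 = Complex.normSq (a + w) := Complex.sq_norm _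
    rw [Complex.normSq_add] at h1
    have h2 : (a * (starRingEnd ℂ) w).re = (w * (starRingEnd ℂ) a).re := by
      simp [Complex.mul_re, Complex.conj_re, Complex.conj_im]; ring
    rw [h1, h2, ← hrx, ← Complex.sq_norm, ← Complex.sq_norm, ← hxdef, ← hydef]; ring
  have hrabs : |r| ≤ y := by
    rw [hrdef, abs_div, abs_of_pos hx, div_le_iff₀ hx]
    calc |(w * (starRingEnd ℂ) a).re| ≤ ‖w * (starRingEnd ℂ) a‖ :=
        Complex.abs_re_le_norm _
      _ = y * x := by rw [norm_mul, Complex.norm_conj]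
  have hlow : x + r ≤ s := by
    have h1 : ((a + w) * (starRingEnd ℂ) a).re ≤ ‖(a + w) * (starRingEnd ℂ) a‖ :=
      Complex.re_le_norm _
    have h2 : ‖(a + w) * (starRingEnd ℂ) a‖ = s * x := by
      rw [norm_mul, Complex.norm_conj]
    have h3 : ((a + w) * (starRingEnd ℂ) a).re = x ^ 2 + r * x := by
      rw [add_mul, Complex.add_re, Complex.mul_conj, hrx]
      simp [Complex.normSq_eq_norm_sq, ← Complex.ofReal_pow, hxdef]
    rw [h2, h3] at h1
    nlinarith
  have hnum : 0 ≤ 2 * x * (x + r) + y ^ 2 := by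
    nlinarith [sq_nonneg (x - y), abs_le.mp hrabs]
  have hB0 : 0 ≤ x + r + y ^ 2 / (2 * x) := by
    rw [show x + r + y ^ 2 / (2 * x) = (2 * x * (x + r) + y ^ 2) / (2 * x) from by
      field_simp]
    exact div_nonneg hnum (by positivity)
  have hup : s ≤ x + r + y ^ 2 / (2 * x) := by
    have key : (x + r + y ^ 2 / (2 * x)) ^ 2 = s ^ 2 + (r + y ^ 2 / (2 * x)) ^ 2 := by
      rw [hsq]; field_simp; ring
    have hsq2 : s ^ 2 ≤ (x + r + y ^ 2 / (2 * x)) ^ 2 := by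
      nlinarith [sq_nonneg (r + y ^ 2 / (2 * x))]
    calc s = Real.sqrt (s ^ 2) := (Real.sqrt_sq hs0).symm
      _ ≤ Real.sqrt ((x + r + y ^ 2 / (2 * x)) ^ 2) := Real.sqrt_le_sqrt hsq2
      _ = _ := Real.sqrt_sq hB0
  rw [hre, abs_le]
  constructor
  · have : 0 ≤ y ^ 2 / (2 * x) := by positivity
    linarith
  · linarith

lemma rvl_zero_finite (W : Set ℂ) (hW : IsOpen W) (hconn : IsPreconnected W)
    (q₀ : ℂ → ℂ) (hq : DifferentiableOn ℂ q₀ W) (hq0 : ∃ z ∈ W, q₀ z ≠ 0)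
    (K : Set ℂ) (hK : IsCompact K) (hKW : K ⊆ W) :
    {z | z ∈ K ∧ q₀ z = 0}.Finite := by
  set Z := {z | z ∈ K ∧ q₀ z = 0} with hZdef
  have han : AnalyticOnNhd ℂ q₀ W := hq.analyticOnNhd hW
  have hZeq : Z = K ∩ q₀ ⁻¹' {0} := by ext z; simp [hZdef]
  have hZcl : IsClosed Z := by
    rw [hZeq]
    exact ContinuousOn.preimage_isClosed_of_isClosed (hq.continuousOn.mono hKW)
      hK.isClosed isClosed_singleton
  have hZc : IsCompact Z := hK.of_isClosed_subset hZcl (by rw [hZeq]; exact Set.inter_subset_left)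
  have hdis : DiscreteTopology Z := by
    rw [discreteTopology_subtype_iff]
    intro z hz
    have hzW : z ∈ W := hKW hz.1
    rcases (han z hzW).eventually_eq_zero_or_eventually_ne_zero with h | h
    · obtain ⟨w, hwW, hw⟩ := hq0
      exact absurd (han.eqOn_zero_of_preconnected_of_eventuallyEq_zero hconn hzW
        (h.mono fun x hx => hx) hwW) hw
    · refine Filter.empty_mem_iff_bot.mp ?_
      have hmem : {w | q₀ w ≠ 0} ∩ Z ∈ 𝓝[≠] z ⊓ 𝓟 Z :=
        inter_mem_inf h (mem_principal_self Z)
      have : {w | q₀ w ≠ 0} ∩ Z = ∅ := by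
        ext w; simp only [Set.mem_inter_iff, Set.mem_setOf_eq, Set.mem_empty_iff_false,
          iff_false, not_and, hZdef]
        tauto
      rwa [this] at hmem
  exact hZc.finite (isDiscrete_iff_discreteTopology.mpr hdis)

/-- **Royden's variational lemma for the L¹-norm** (in a coordinate chart).  Let `W ⊆ ℂ`
be a connected open set, `q₀` holomorphic on `W` and not identically zero, `φ` a `C^∞`
function on `W`, and `K ⊆ W` compact.  Then `f(t) = ∫_K |q₀ + t·φ| dA` is
real-differentiable at `t = 0` and
`f(t) = f(0) + (t/2)·∫_K (conj q₀/|q₀|)·φ + (conj t/2)·∫_K (q₀/|q₀|)·conj φ + o(|t|)`;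
equivalently `f(t) = f(0) + Re (t·∫_K (conj q₀/|q₀|)·φ) + o(|t|)`. -/
theorem royden_variational_lemma (W : Set ℂ) (hW : IsOpen W) (hconn : IsPreconnected W)
    (q₀ φ : ℂ → ℂ) (hq : DifferentiableOn ℂ q₀ W) (hq0 : ∃ z ∈ W, q₀ z ≠ 0)
    (hφ : ContDiffOn ℝ (⊤ : ℕ∞) φ W) (K : Set ℂ) (hK : IsCompact K) (hKW : K ⊆ W) :
    DifferentiableAt ℝ (fun t : ℂ => ∫ z in K, ‖q₀ z + t * φ z‖) 0 ∧
    (fun t : ℂ =>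
        ((∫ z in K, ‖q₀ z + t * φ z‖) : ℂ) -
          (((∫ z in K, ‖q₀ z‖) : ℂ)
            + (t / 2) *
                (∫ z in K, ((starRingEnd ℂ) (q₀ z) / (‖q₀ z‖ : ℂ)) * φ z)
            + ((starRingEnd ℂ) t / 2) *
                (∫ z in K, (q₀ z / (‖q₀ z‖ : ℂ)) * (starRingEnd ℂ) (φ z))))
      =o[𝓝 0] (fun t : ℂ => ‖t‖) ∧
    (fun t : ℂ =>
        (∫ z in K, ‖q₀ z + t * φ z‖) -
          ((∫ z in K, ‖q₀ z‖)
            + (t * ∫ z in K,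
                ((starRingEnd ℂ) (q₀ z) / (‖q₀ z‖ : ℂ)) * φ z).re))
      =o[𝓝 0] (fun t : ℂ => ‖t‖) := by
  have hKm : MeasurableSet K := hK.measurableSet
  have hqK : ContinuousOn q₀ K := hq.continuousOn.mono hKW
  have hφK : ContinuousOn φ K := (hφ.continuousOn).mono hKW
  set c : ℂ → ℂ := fun z => (starRingEnd ℂ) (q₀ z) / (‖q₀ z‖ : ℂ) * φ z with hcdef
  set f : ℂ → ℝ := fun t => ∫ z in K, ‖q₀ z + t * φ z‖ with hfdef
  have hqm : AEStronglyMeasurable q₀ (volume.restrict K) := hqK.aestronglyMeasurable hKm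
  have hφm : AEStronglyMeasurable φ (volume.restrict K) := hφK.aestronglyMeasurable hKm
  have hcm : AEStronglyMeasurable c (volume.restrict K) := by
    have h1 : AEMeasurable (fun z => (starRingEnd ℂ) (q₀ z)) (volume.restrict K) :=
      (Complex.continuous_conj.comp_aestronglyMeasurable hqm).aemeasurable
    have h2 : AEMeasurable (fun z => ((‖q₀ z‖ : ℝ) : ℂ)) (volume.restrict K) :=
      ((Complex.continuous_ofReal.comp continuous_norm).comp_aestronglyMeasurable
        hqm).aemeasurable
    exact ((h1.div h2).mul hφm.aemeasurable).aestronglyMeasurable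
  obtain ⟨M, hM⟩ := hK.exists_bound_of_continuousOn hφK
  have hc_le : ∀ z, ‖c z‖ ≤ ‖φ z‖ := by
    intro z
    rw [hcdef]
    simp only [norm_mul, norm_div, Complex.norm_conj, Complex.norm_real, norm_norm]
    exact mul_le_of_le_one_left (norm_nonneg _) (div_self_le_one _)
  have hμK : volume K ≠ ⊤ := hK.measure_lt_top.ne
  have hcI : IntegrableOn c K := by
    refine ⟨hcm, HasFiniteIntegral.restrict_of_bounded (C := M) hK.measure_lt_top ?_⟩
    filter_upwards [ae_restrict_mem hKm] with z hz
    simpa using (hc_le z).trans (by simpa using hM z hz)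
  have habs_int : ∀ t : ℂ, IntegrableOn (fun z => ‖q₀ z + t * φ z‖) K := fun t =>
    (continuous_norm.comp_continuousOn
      (hqK.add (continuousOn_const.mul hφK))).integrableOn_compact hK
  have habs0 : IntegrableOn (fun z => ‖q₀ z‖) K :=
    (continuous_norm.comp_continuousOn hqK).integrableOn_compact hK
  set I := ∫ z in K, c z with hIdef
  have htcI : ∀ t : ℂ, IntegrableOn (fun z => (t * c z).re) K := fun t => by
    simpa [IntegrableOn] using (Complex.reCLM : ℂ →L[ℝ] ℝ).integrable_comp (hcI.const_mul t)
  set e : ℂ → ℂ → ℝ := fun t z =>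
    ‖q₀ z + t * φ z‖ - ‖q₀ z‖ - (t * c z).re with hedef
  have heI : ∀ t, IntegrableOn (fun z => e t z) K := fun t =>
    ((habs_int t).sub habs0).sub (htcI t)
  have he0 : ∀ z, e 0 z = 0 := by intro z; simp [hedef]
  have hkey : ∀ t z : ℂ, t * c z
      = (t * φ z) * (starRingEnd ℂ) (q₀ z) / (‖q₀ z‖ : ℂ) := by
    intro t z; rw [hcdef]; ring
  have hebound : ∀ t z : ℂ, |e t z| ≤ 2 * ‖φ z‖ * ‖t‖ := by
    intro t z
    have h := rvl_est_gen (q₀ z) (t * φ z)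
    rw [← hkey t z] at h
    calc |e t z| ≤ 2 * ‖t * φ z‖ := by simpa [hedef] using h
      _ = 2 * ‖φ z‖ * ‖t‖ := by rw [norm_mul]; ring
  have hebound2 : ∀ t z : ℂ, q₀ z ≠ 0 →
      |e t z| ≤ ‖t‖ * (‖t‖ * (‖φ z‖ ^ 2 / (2 * ‖q₀ z‖))) := by
    intro t z hz
    have h := rvl_est_ne (q₀ z) (t * φ z) hz
    rw [← hkey t z] at h
    calc |e t z| ≤ ‖t * φ z‖ ^ 2 / (2 * ‖q₀ z‖) := by
          simpa [hedef] using h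
      _ = ‖t‖ * (‖t‖ * (‖φ z‖ ^ 2 / (2 * ‖q₀ z‖))) := by
          rw [norm_mul]; ring
  have hf0 : f 0 = ∫ z in K, ‖q₀ z‖ := by simp [hfdef]
  have hsplit : ∀ t : ℂ, f t - (f 0 + (t * I).re) = ∫ z in K, e t z := by
    intro t
    have hre : (t * I).re = ∫ z in K, (t * c z).re := by
      have := (Complex.reCLM : ℂ →L[ℝ] ℝ).integral_comp_comm (hcI.const_mul t)
      simpa [hIdef, integral_const_mul] using this.symm
    have hAB : IntegrableOn
        (fun z => ‖q₀ z + t * φ z‖ - ‖q₀ z‖) K :=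
      (habs_int t).sub habs0
    calc f t - (f 0 + (t * I).re)
        = (∫ z in K, ‖q₀ z + t * φ z‖) - (∫ z in K, ‖q₀ z‖)
          - ∫ z in K, (t * c z).re := by rw [hf0, hre, hfdef]; simp only; ring
      _ = (∫ z in K, (‖q₀ z + t * φ z‖ - ‖q₀ z‖))
          - ∫ z in K, (t * c z).re := by rw [integral_sub (habs_int t) habs0]
      _ = ∫ z in K, (‖q₀ z + t * φ z‖ - ‖q₀ z‖ - (t * c z).re) := by
          rw [integral_sub hAB (htcI t)]
      _ = ∫ z in K, e t z := rfl
  -- a.e. nonvanishing of q₀ on K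
  have hfin := rvl_zero_finite W hW hconn q₀ hq hq0 K hK hKW
  have hae : ∀ᵐ z ∂(volume.restrict K), q₀ z ≠ 0 := by
    have h1 : ∀ᵐ z ∂(volume : Measure ℂ), z ∉ {z | z ∈ K ∧ q₀ z = 0} :=
      measure_eq_zero_iff_ae_notMem.mp (hfin.measure_zero volume)
    filter_upwards [ae_restrict_of_ae h1, ae_restrict_mem hKm] with z h2 h3
    exact fun h => h2 ⟨h3, h⟩
  have hφabs_int : IntegrableOn (fun z => ‖φ z‖) K :=
    (continuous_norm.comp_continuousOn hφK).integrableOn_compact hK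
  -- the central little-o estimate
  have hO : (fun t : ℂ => ∫ z in K, e t z) =o[𝓝 0] (fun t : ℂ => ‖t‖) := by
    rw [isLittleO_iff]
    intro ε hε
    have htend : Tendsto (fun t : ℂ => ∫ z in K, e t z / ‖t‖) (𝓝[≠] (0 : ℂ)) (𝓝 0) := by
      have h00 : (0 : ℝ) = ∫ _z in K, (0 : ℝ) := by simp
      rw [h00]
      apply tendsto_integral_filter_of_dominated_convergence
        (fun z => 2 * ‖φ z‖)
      · filter_upwards with t
        exact ((heI t).div_const _).aestronglyMeasurable
      · filter_upwards [self_mem_nhdsWithin] with t ht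
        filter_upwards with z
        have ht0 : t ≠ 0 := ht
        have hnt : (0 : ℝ) < ‖t‖ := norm_pos_iff.mpr ht0
        rw [norm_div, Real.norm_eq_abs, norm_norm, div_le_iff₀ hnt]
        exact hebound t z
      · exact hφabs_int.const_mul 2
      · filter_upwards [hae] with z hz
        apply squeeze_zero_norm' (a := fun t : ℂ =>
          ‖t‖ * (‖φ z‖ ^ 2 / (2 * ‖q₀ z‖)))
        · filter_upwards [self_mem_nhdsWithin] with t ht
          have ht0 : t ≠ 0 := ht
          have hnt : (0 : ℝ) < ‖t‖ := norm_pos_iff.mpr ht0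
          rw [norm_div, Real.norm_eq_abs, norm_norm, div_le_iff₀ hnt]
          calc |e t z| ≤ ‖t‖ * (‖t‖ * (‖φ z‖ ^ 2 / (2 * ‖q₀ z‖))) :=
              hebound2 t z hz
            _ = ‖t‖ * (‖φ z‖ ^ 2 / (2 * ‖q₀ z‖)) * ‖t‖ := by ring
        · have h1 : Tendsto (fun t : ℂ =>
              ‖t‖ * (‖φ z‖ ^ 2 / (2 * ‖q₀ z‖))) (𝓝 0)
              (𝓝 (‖(0 : ℂ)‖ * (‖φ z‖ ^ 2 / (2 * ‖q₀ z‖)))) :=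
            ((continuous_norm.tendsto (0 : ℂ))).mul_const _
          simpa using h1.mono_left nhdsWithin_le_nhds
    rw [← nhdsNE_sup_pure (0 : ℂ), eventually_sup]
    constructor
    · filter_upwards [Metric.tendsto_nhds.mp htend ε hε, self_mem_nhdsWithin] with t h1 ht
      have ht0 : t ≠ 0 := ht
      have hnt : (0 : ℝ) < ‖t‖ := norm_pos_iff.mpr ht0
      rw [Real.dist_eq, sub_zero, integral_div, abs_div,
        _root_.abs_of_pos hnt] at h1
      rw [Real.norm_eq_abs, norm_norm]
      exact (div_le_iff₀ hnt).mp h1.le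
    · rw [eventually_pure]
      simp [he0]
  -- assemble conclusions
  have hO3 : (fun t : ℂ => f t - (f 0 + (t * I).re)) =o[𝓝 0] (fun t : ℂ => ‖t‖) := by
    have heq : (fun t : ℂ => f t - (f 0 + (t * I).re)) = fun t => ∫ z in K, e t z :=
      funext fun t => hsplit t
    rw [heq]; exact hO
  have hder : HasFDerivAt f
      (Complex.reCLM.comp ((ContinuousLinearMap.mul ℂ ℂ I).restrictScalars ℝ)) 0 := by
    rw [hasFDerivAt_iff_isLittleO_nhds_zero, ← isLittleO_norm_right]
    have heq : (fun h : ℂ => f (0 + h) - f 0 -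
        (Complex.reCLM.comp ((ContinuousLinearMap.mul ℂ ℂ I).restrictScalars ℝ)) h)
        = fun t : ℂ => f t - (f 0 + (t * I).re) := by
      funext t
      simp only [zero_add, ContinuousLinearMap.coe_comp', Function.comp_apply,
        ContinuousLinearMap.coe_restrictScalars', ContinuousLinearMap.mul_apply',
        Complex.reCLM_apply, mul_comm I t]
      ring
    rw [heq]; exact hO3
  have hconjint : (∫ z in K, (q₀ z / (‖q₀ z‖ : ℂ)) * (starRingEnd ℂ) (φ z))
      = (starRingEnd ℂ) I := by
    rw [hIdef, ← integral_conj]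
    congr 1
    funext z
    rw [hcdef]
    simp only [map_mul, map_div₀, Complex.conj_conj, Complex.conj_ofReal]
  refine ⟨hder.differentiableAt, ?_, ?_⟩
  · have heq2 : (fun t : ℂ =>
        ((∫ z in K, ‖q₀ z + t * φ z‖) : ℂ) -
          (((∫ z in K, ‖q₀ z‖) : ℂ)
            + (t / 2) * (∫ z in K, c z)
            + ((starRingEnd ℂ) t / 2) *
                (∫ z in K, (q₀ z / (‖q₀ z‖ : ℂ)) * (starRingEnd ℂ) (φ z))))
        = fun t : ℂ => ((f t - (f 0 + (t * I).re) : ℝ) : ℂ) := by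
      funext t
      have hc2 : t / 2 * I + (starRingEnd ℂ) t / 2 * (starRingEnd ℂ) I
          = (((t * I).re : ℝ) : ℂ) := by
        have h := Complex.add_conj (t * I)
        rw [map_mul] at h
        push_cast at h
        linear_combination h / 2
      rw [show (∫ z in K, ((‖q₀ z + t * φ z‖ : ℝ) : ℂ))
            = ((∫ z in K, ‖q₀ z + t * φ z‖ : ℝ) : ℂ) from integral_ofReal,
        show (∫ z in K, ((‖q₀ z‖ : ℝ) : ℂ))
            = ((∫ z in K, ‖q₀ z‖ : ℝ) : ℂ) from integral_ofReal,
        hconjint, hf0]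
      simp only [hfdef]
      push_cast
      rw [← hIdef]
      linear_combination -hc2
    rw [heq2, ← isLittleO_norm_left]
    have hnn : (fun t : ℂ => ‖((f t - (f 0 + (t * I).re) : ℝ) : ℂ)‖)
        = fun t : ℂ => ‖f t - (f 0 + (t * I).re)‖ := by
      funext t; rw [Complex.norm_real]
    rw [hnn]
    exact hO3.norm_left
  · have heq3 : (fun t : ℂ =>
        (∫ z in K, ‖q₀ z + t * φ z‖) -
          ((∫ z in K, ‖q₀ z‖) + (t * ∫ z in K, c z).re))
        = fun t : ℂ => f t - (f 0 + (t * I).re) := by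
      funext t
      rw [hf0]
    rw [heq3]
    exact hO3
end

section
/- Let G : ℂⁿ → ℝ be continuous, positive, convex, complex homogeneous, and strictly convex, and let F(ξ) = sup{Re(η(ξ)) : η ∈ ℂⁿ, G(η) = 1} be the dual norm. Let ξ, h ∈ ℂⁿ with F(ξ) = 1. Then the function f : ℝ → ℝ, f(t) = F(ξ + t·h), is differentiable at t = 0 and f'(0) = Re(η₀(h)), where η₀ is the unique vector with G(η₀) = 1 and F(ξ) = Re(η₀(ξ)). -/
open Complex Filter Asymptotics Topology

lemma royden_cpair_add_left {n : ℕ} (η₁ η₂ ξ : Fin n → ℂ) :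
    cpair (η₁ + η₂) ξ = cpair η₁ ξ + cpair η₂ ξ := by
  simp [cpair, add_mul, Finset.sum_add_distrib]

lemma royden_cpair_smul_left {n : ℕ} (α : ℂ) (η ξ : Fin n → ℂ) :
    cpair (α • η) ξ = α * cpair η ξ := by
  simp [cpair, Finset.mul_sum, mul_assoc]

lemma royden_cpair_right {n : ℕ} (η ξ h : Fin n → ℂ) (t : ℝ) :
    cpair η (ξ + t • h) = cpair η ξ + (t : ℂ) * cpair η h := by
  simp [cpair, mul_add, Finset.sum_add_distrib, Complex.real_smul, Finset.mul_sum,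
    mul_left_comm]

lemma royden_cpair_cont {n : ℕ} (ξ : Fin n → ℂ) :
    Continuous fun η : Fin n → ℂ => (cpair η ξ).re :=
  Complex.continuous_re.comp (continuous_finset_sum _ fun i _ =>
    (continuous_apply i).mul continuous_const)

lemma royden_sphere_compact {n : ℕ} (G : (Fin n → ℂ) → ℝ)
    (hGcont : Continuous G) (hGpos : IsPositiveFn G)
    (hGhom : IsComplexHomogeneous G)
    (η₀ : Fin n → ℂ) (hη₀ : G η₀ = 1) :
    IsCompact {η : Fin n → ℂ | G η = 1} := by
  have hG0 : G 0 = 0 := by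
    have := hGhom 0 0; simpa using this
  have hη₀ne : η₀ ≠ 0 := by rintro rfl; rw [hG0] at hη₀; norm_num at hη₀
  have : Nontrivial (Fin n → ℂ) := ⟨⟨η₀, 0, hη₀ne⟩⟩
  obtain ⟨u, hu, humin⟩ := (isCompact_sphere (0 : Fin n → ℂ) 1).exists_isMinOn
    (NormedSpace.sphere_nonempty.mpr zero_le_one) hGcont.continuousOn
  have hune : u ≠ 0 := by
    intro h0
    simp [h0] at hu
  have hc : 0 < G u := hGpos u hune
  have hclosed : IsClosed {η : Fin n → ℂ | G η = 1} :=
    isClosed_eq hGcont continuous_const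
  have hsub : {η : Fin n → ℂ | G η = 1} ⊆ Metric.closedBall 0 (G u)⁻¹ := by
    intro η hη
    have hηne : η ≠ 0 := by rintro rfl; simp [hG0] at hη
    have hr : (0:ℝ) < ‖η‖ := norm_pos_iff.mpr hηne
    set v : Fin n → ℂ := ((‖η‖ : ℂ))⁻¹ • η with hv
    have hvnorm : ‖v‖ = 1 := by
      rw [hv, norm_smul]
      simp [norm_inv, Complex.norm_real, abs_of_pos hr, inv_mul_cancel₀ hr.ne']
    have hvsphere : v ∈ Metric.sphere (0 : Fin n → ℂ) 1 := by
      simpa [Metric.mem_sphere, dist_zero_right] using hvnorm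
    have hmin := humin hvsphere
    have hηv : ((‖η‖ : ℂ)) • v = η := by
      rw [hv, smul_inv_smul₀]
      exact_mod_cast (Complex.ofReal_ne_zero.mpr hr.ne')
    have h1 : ‖η‖ * G v = 1 := by
      have := hGhom ((‖η‖ : ℂ)) v
      rw [hηv] at this
      rw [(hη : G η = 1)] at this
      simpa [Complex.norm_real, abs_of_pos hr] using this.symm
    have hle1 : ‖η‖ * G u ≤ 1 := by
      calc ‖η‖ * G u ≤ ‖η‖ * G v := mul_le_mul_of_nonneg_left hmin hr.le
        _ = 1 := h1
    have : ‖η‖ ≤ (G u)⁻¹ := by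
      rw [inv_eq_one_div, le_div_iff₀ hc]; exact hle1
    simpa [Metric.mem_closedBall, dist_zero_right] using this
  exact (isCompact_closedBall 0 _).of_isClosed_subset hclosed hsub

/-- **Directional differentiability of the dual norm (Claim 2 (4) in the proof of
Royden's criterion).**  If `G : ℂⁿ → ℝ` is continuous, positive, convex, complex
homogeneous and strictly convex, `F` its dual norm, and `ξ, h ∈ ℂⁿ` with `F ξ = 1`, then
`t ↦ F (ξ + t·h)` is differentiable at `t = 0` with derivative `Re (η₀(h))`, where `η₀`
is the (unique) vector with `G η₀ = 1` and `F ξ = Re (η₀(ξ))`. -/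
theorem royden_dual_norm_directional_derivative {n : ℕ} (G : (Fin n → ℂ) → ℝ)
    (hGcont : Continuous G) (hGpos : IsPositiveFn G) (hGconv : IsConvexFn G)
    (hGhom : IsComplexHomogeneous G) (hGsc : IsStrictlyConvexFn G)
    (ξ h : Fin n → ℂ) (hξ : dualNorm G ξ = 1)
    (η₀ : Fin n → ℂ) (hη₀ : G η₀ = 1) (hsupp : dualNorm G ξ = (cpair η₀ ξ).re) :
    HasDerivAt (fun t : ℝ => dualNorm G (ξ + t • h)) ((cpair η₀ h).re) 0 := by
  set S : Set (Fin n → ℂ) := {η | G η = 1} with hS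
  have hScpt : IsCompact S := royden_sphere_compact G hGcont hGpos hGhom η₀ hη₀
  have hSne : S.Nonempty := ⟨η₀, hη₀⟩
  have hG0 : G 0 = 0 := by have := hGhom 0 0; simpa using this
  have hF : ∀ ζ : Fin n → ℂ, dualNorm G ζ = sSup ((fun η => (cpair η ζ).re) '' S) := by
    intro ζ
    rw [dualNorm]
    congr 1
    ext r
    simp only [Set.mem_setOf_eq, Set.mem_image, hS]
    exact ⟨fun ⟨η, h1, h2⟩ => ⟨η, h1, h2.symm⟩, fun ⟨η, h1, h2⟩ => ⟨η, h1, h2.symm⟩⟩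
  have hAcpt : ∀ ζ : Fin n → ℂ, IsCompact ((fun η => (cpair η ζ).re) '' S) :=
    fun ζ => hScpt.image (royden_cpair_cont ζ)
  have hmem : ∀ ζ : Fin n → ℂ, ∃ η ∈ S, (cpair η ζ).re = dualNorm G ζ := by
    intro ζ
    have := (hAcpt ζ).sSup_mem (hSne.image _)
    rw [← hF] at this
    obtain ⟨η, hη, heq⟩ := this
    exact ⟨η, hη, heq⟩
  have hle : ∀ (ζ : Fin n → ℂ), ∀ η ∈ S, (cpair η ζ).re ≤ dualNorm G ζ := by
    intro ζ η hη
    rw [hF]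
    exact le_csSup (hAcpt ζ).bddAbove ⟨η, hη, rfl⟩
  have hbound1 : ∀ η ∈ S, (cpair η ξ).re ≤ 1 := fun η hη => hξ ▸ hle ξ η hη
  have hpairle : ∀ ζ : Fin n → ℂ, (cpair ζ ξ).re ≤ G ζ := by
    intro ζ
    rcases eq_or_ne ζ 0 with rfl | hne
    · simp [cpair, hG0]
    · have hc : 0 < G ζ := hGpos ζ hne
      set u : Fin n → ℂ := ((G ζ : ℂ))⁻¹ • ζ with hu
      have hGu : G u = 1 := by
        rw [hu, hGhom]
        simp [map_inv₀, Complex.norm_real, abs_of_pos hc, inv_mul_cancel₀ hc.ne']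
      have hb := hbound1 u hGu
      rw [hu, royden_cpair_smul_left, ← Complex.ofReal_inv, Complex.re_ofReal_mul] at hb
      rw [inv_mul_le_iff₀ hc] at hb
      simpa using hb
  have h1ξ : (cpair η₀ ξ).re = 1 := by rw [← hsupp, hξ]
  have huniq : ∀ η ∈ S, (cpair η ξ).re = 1 → η = η₀ := by
    intro η hη heq
    by_contra hne
    have h2 : G (η + η₀) < 2 := hGsc.2 η η₀ hη hη₀ hne
    have h3 : (cpair (η + η₀) ξ).re = 2 := by
      rw [royden_cpair_add_left, Complex.add_re, heq, h1ξ]; norm_num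
    linarith [hpairle (η + η₀)]
  set d : ℝ := (cpair η₀ h).re with hd
  obtain ⟨ηC, hηC, hmaxC⟩ := hScpt.exists_isMaxOn hSne
    ((continuous_abs.comp (royden_cpair_cont h)).continuousOn)
  set C : ℝ := |(cpair ηC h).re| with hCdef
  have hCb : ∀ η ∈ S, |(cpair η h).re| ≤ C := fun η hη => hmaxC hη
  have hC0 : (0:ℝ) ≤ C := abs_nonneg _
  have key : ∀ ε > (0:ℝ), ∃ δ > (0:ℝ),
      ∀ η ∈ S, 1 - δ < (cpair η ξ).re → |(cpair η h).re - d| < ε := by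
    intro ε hε
    set K : Set (Fin n → ℂ) := {η ∈ S | ε ≤ |(cpair η h).re - d|} with hK
    have hKcl : IsClosed K := by
      apply IsClosed.inter (isClosed_eq hGcont continuous_const)
      exact isClosed_le continuous_const
        ((continuous_abs.comp ((royden_cpair_cont h).sub continuous_const)))
    have hKcpt : IsCompact K :=
      hScpt.of_isClosed_subset hKcl (fun η hη => hη.1)
    rcases K.eq_empty_or_nonempty with hKe | hKne
    · refine ⟨1, one_pos, fun η hη _ => ?_⟩
      by_contra hcon
      push_neg at hcon
      have : η ∈ K := ⟨hη, hcon⟩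
      simp [hKe] at this
    · obtain ⟨η₁, hη₁K, hmax⟩ := hKcpt.exists_isMaxOn hKne (royden_cpair_cont ξ).continuousOn
      have hM1 : (cpair η₁ ξ).re ≤ 1 := hbound1 η₁ hη₁K.1
      have hMlt : (cpair η₁ ξ).re < 1 := by
        rcases lt_or_eq_of_le hM1 with hlt | heq
        · exact hlt
        · exfalso
          have := huniq η₁ hη₁K.1 heq
          rw [this] at hη₁K
          have h0 := hη₁K.2
          simp [hd] at h0
          linarith
      refine ⟨1 - (cpair η₁ ξ).re, by linarith, fun η hη hgt => ?_⟩
      by_contra hcon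
      push_neg at hcon
      have hKmem : η ∈ K := ⟨hη, hcon⟩
      have := hmax hKmem
      simp only [Set.mem_setOf_eq] at this
      linarith
  have hlow : ∀ t : ℝ, 1 + t * d ≤ dualNorm G (ξ + t • h) := by
    intro t
    have hb := hle (ξ + t • h) η₀ hη₀
    rw [royden_cpair_right, Complex.add_re, Complex.re_ofReal_mul, h1ξ] at hb
    exact hb
  rw [hasDerivAt_iff_tendsto_slope, Metric.tendsto_nhdsWithin_nhds]
  intro ε hε
  obtain ⟨δ₁, hδ₁, hδprop⟩ := key ε hε
  refine ⟨δ₁ / (|d| + C + 1), by positivity, fun {t} ht htδ => ?_⟩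
  have htne : t ≠ 0 := ht
  rw [Real.dist_eq, sub_zero] at htδ
  set f : ℝ → ℝ := fun t : ℝ => dualNorm G (ξ + t • h) with hfdef
  have hf0 : f 0 = 1 := by
    simp only [hfdef, zero_smul, add_zero]
    exact hξ
  obtain ⟨ηt, hηtS, hηteq⟩ := hmem (ξ + t • h)
  rw [royden_cpair_right, Complex.add_re, Complex.re_ofReal_mul] at hηteq
  set p : ℝ := (cpair ηt h).re with hp
  set q : ℝ := (cpair ηt ξ).re with hq
  have hq1 : q ≤ 1 := hbound1 ηt hηtS
  have hft : q + t * p = f t := hηteq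
  have hflow : 1 + t * d ≤ f t := hlow t
  have hpC : |p| ≤ C := hCb ηt hηtS
  have habs1 : -(|t| * |d|) ≤ t * d := by
    calc -(|t| * |d|) = -|t * d| := by rw [abs_mul]
      _ ≤ t * d := neg_abs_le _
  have habs2 : t * p ≤ |t| * C := by
    calc t * p ≤ |t * p| := le_abs_self _
      _ = |t| * |p| := abs_mul t p
      _ ≤ |t| * C := mul_le_mul_of_nonneg_left hpC (abs_nonneg t)
  have hqbig : 1 - δ₁ < q := by
    have h1 : |t| * (|d| + C + 1) < δ₁ := by
      rw [← lt_div_iff₀ (by positivity : (0:ℝ) < |d| + C + 1)]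
      exact htδ
    have habs0 : 0 < |t| := abs_pos.mpr htne
    nlinarith [abs_nonneg d]
  have hnear := hδprop ηt hηtS hqbig
  -- slope estimate
  have hfd : t * d ≤ f t - 1 := by linarith
  have hfp : f t - 1 ≤ t * p := by linarith
  have hs0 : 0 ≤ (f t - 1) - t * d := by linarith
  have hs1 : (f t - 1) - t * d ≤ t * (p - d) := by ring_nf; linarith
  have hslope : slope f 0 t - d = ((f t - 1) - t * d) / t := by
    rw [slope_def_field, hf0]
    field_simp
    ring
  rw [Real.dist_eq, hslope, abs_div]
  rw [div_lt_iff₀ (abs_pos.mpr htne)]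
  calc |f t - 1 - t * d| = (f t - 1) - t * d := abs_of_nonneg hs0
    _ ≤ t * (p - d) := hs1
    _ ≤ |t * (p - d)| := le_abs_self _
    _ = |p - d| * |t| := by rw [abs_mul, mul_comm]
    _ < ε * |t| := by
        apply mul_lt_mul_of_pos_right hnear (abs_pos.mpr htne)
end

section
/- Let U ⊆ ℂ^m be open and G : U × ℂⁿ → ℝ continuous such that for every x ∈ U the function G(x,·) is positive, convex, complex homogeneous, and strictly convex; let F be the dual metric. For (x, ξ) ∈ U × (ℂⁿ∖{0}) let η_{x,ξ} denote the unique vector with G(x, η_{x,ξ}) = 1 and F(x, ξ) = Re(η_{x,ξ}(ξ)). Then the map (x, ξ) ↦ η_{x,ξ} is continuous on U × (ℂⁿ∖{0}). -/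
open Complex Filter Asymptotics Topology

section RoydenAux

variable {m n : ℕ}

lemma cpair_add_left (η₁ η₂ ξ : Fin n → ℂ) :
    cpair (η₁ + η₂) ξ = cpair η₁ ξ + cpair η₂ ξ := by
  simp [cpair, add_mul, Finset.sum_add_distrib]

lemma cpair_smul_left (c : ℂ) (η ξ : Fin n → ℂ) :
    cpair (c • η) ξ = c * cpair η ξ := by
  simp [cpair, Finset.mul_sum, mul_assoc]

lemma continuous_cpair :
    Continuous fun p : (Fin n → ℂ) × (Fin n → ℂ) => cpair p.1 p.2 :=
  continuous_finset_sum _ fun i _ =>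
    (((continuous_apply i).comp continuous_fst).mul
      ((continuous_apply i).comp continuous_snd))

lemma re_cpair_le (η ξ : Fin n → ℂ) : (cpair η ξ).re ≤ n * ‖η‖ * ‖ξ‖ := by
  calc (cpair η ξ).re ≤ ‖cpair η ξ‖ := by
        simpa using Complex.re_le_norm (cpair η ξ)
    _ ≤ ∑ i : Fin n, ‖η i * ξ i‖ := norm_sum_le _ _
    _ ≤ ∑ _i : Fin n, ‖η‖ * ‖ξ‖ := by
        refine Finset.sum_le_sum fun i _ => ?_
        rw [norm_mul]
        exact mul_le_mul (norm_le_pi_norm η i) (norm_le_pi_norm ξ i)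
          (norm_nonneg _) (norm_nonneg _)
    _ = n * ‖η‖ * ‖ξ‖ := by simp [Finset.sum_const, mul_assoc]

lemma G_zero_of_hom {G : (Fin n → ℂ) → ℝ} (hhom : IsComplexHomogeneous G) :
    G 0 = 0 := by simpa using hhom 0 0

/-- Uniform positive lower bound `c ‖η‖ ≤ G (x, η)` on a compact set of base points. -/
lemma exists_lower_bound {U : Set (Fin m → ℂ)} {G : (Fin m → ℂ) × (Fin n → ℂ) → ℝ}
    (hGcont : ContinuousOn G (U ×ˢ (Set.univ : Set (Fin n → ℂ))))
    (hGpos : ∀ x ∈ U, IsPositiveFn fun η => G (x, η))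
    (hGhom : ∀ x ∈ U, IsComplexHomogeneous fun η => G (x, η))
    {K : Set (Fin m → ℂ)} (hK : IsCompact K) (hKne : K.Nonempty) (hKU : K ⊆ U)
    (hn : ∃ ζ : Fin n → ℂ, ζ ≠ 0) :
    ∃ c > 0, ∀ x ∈ K, ∀ η : Fin n → ℂ, c * ‖η‖ ≤ G (x, η) := by
  obtain ⟨ζ, hζ⟩ := hn
  have hζn : ‖ζ‖ ≠ 0 := norm_ne_zero_iff.2 hζ
  have hsne : (Metric.sphere (0 : Fin n → ℂ) 1).Nonempty := by
    refine ⟨(↑(‖ζ‖⁻¹) : ℂ) • ζ, ?_⟩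
    simp [norm_smul, _root_.abs_of_nonneg (inv_nonneg.2 (norm_nonneg ζ)),
      inv_mul_cancel₀ hζn]
  have hcomp : IsCompact (K ×ˢ Metric.sphere (0 : Fin n → ℂ) 1) :=
    hK.prod (isCompact_sphere _ _)
  have hcont : ContinuousOn G (K ×ˢ Metric.sphere (0 : Fin n → ℂ) 1) :=
    hGcont.mono (Set.prod_mono hKU (Set.subset_univ _))
  obtain ⟨p₀, hp₀mem, hmin⟩ := hcomp.exists_isMinOn (hKne.prod hsne) hcont
  have hp₀K : p₀.1 ∈ K := hp₀mem.1
  have hp₀s : ‖p₀.2‖ = 1 := by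
    have := hp₀mem.2
    simpa [Metric.mem_sphere, dist_zero_right] using this
  have hp₀ne : p₀.2 ≠ 0 := by
    intro h; rw [h] at hp₀s; simp at hp₀s
  refine ⟨G p₀, hGpos p₀.1 (hKU hp₀K) p₀.2 hp₀ne, ?_⟩
  intro x hx η
  rcases eq_or_ne η 0 with rfl | hηne
  · have h0 : G (x, 0) = 0 := G_zero_of_hom (hGhom x (hKU hx))
    simp [h0]
  · have hηn : ‖η‖ ≠ 0 := norm_ne_zero_iff.2 hηne
    set u : Fin n → ℂ := (↑(‖η‖⁻¹) : ℂ) • η with hu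
    have hunorm : ‖u‖ = 1 := by
      simp [hu, norm_smul, _root_.abs_of_nonneg (inv_nonneg.2 (norm_nonneg η)),
        inv_mul_cancel₀ hηn]
    have humem : (x, u) ∈ K ×ˢ Metric.sphere (0 : Fin n → ℂ) 1 :=
      ⟨hx, by simp [Metric.mem_sphere, dist_zero_right, hunorm]⟩
    have hmin' : G p₀ ≤ G (x, u) := isMinOn_iff.mp hmin _ humem
    have hsmul : (↑(‖η‖) : ℂ) • u = η := by
      rw [hu, smul_smul, ← Complex.ofReal_mul, mul_inv_cancel₀ hηn]
      simp
    have hhom := hGhom x (hKU hx) (↑(‖η‖) : ℂ) u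
    simp only at hhom
    rw [hsmul] at hhom
    have habs : ‖(↑(‖η‖) : ℂ)‖ = ‖η‖ := by
      simp [Complex.norm_real, _root_.abs_of_nonneg (norm_nonneg η)]
    rw [habs] at hhom
    rw [hhom, mul_comm]
    exact mul_le_mul_of_nonneg_left hmin' (norm_nonneg η)

/-- Pointwise: the defining set of the dual norm is bounded above. -/
lemma re_le_dualMetric {U : Set (Fin m → ℂ)} {G : (Fin m → ℂ) × (Fin n → ℂ) → ℝ}
    (hGcont : ContinuousOn G (U ×ˢ (Set.univ : Set (Fin n → ℂ))))
    (hGpos : ∀ x ∈ U, IsPositiveFn fun η => G (x, η))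
    (hGhom : ∀ x ∈ U, IsComplexHomogeneous fun η => G (x, η))
    (hn : ∃ ζ : Fin n → ℂ, ζ ≠ 0)
    {x : Fin m → ℂ} (hx : x ∈ U) (ξ : Fin n → ℂ)
    {η : Fin n → ℂ} (hη1 : G (x, η) = 1) :
    (cpair η ξ).re ≤ dualMetric G x ξ := by
  obtain ⟨c, hc, hlow⟩ := exists_lower_bound hGcont hGpos hGhom
    (isCompact_singleton (x := x)) ⟨x, rfl⟩ (by simpa using hx) hn
  have hbdd : BddAbove {r : ℝ | ∃ η : Fin n → ℂ, G (x, η) = 1 ∧ r = (cpair η ξ).re} := by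
    refine ⟨n * c⁻¹ * ‖ξ‖, ?_⟩
    rintro r ⟨η', h1, rfl⟩
    have hb := hlow x rfl η'
    rw [h1] at hb
    have hηb : ‖η'‖ ≤ c⁻¹ := by
      have hcc : c * c⁻¹ = 1 := mul_inv_cancel₀ (ne_of_gt hc)
      nlinarith [norm_nonneg η']
    calc (cpair η' ξ).re ≤ n * ‖η'‖ * ‖ξ‖ := re_cpair_le η' ξ
      _ ≤ n * c⁻¹ * ‖ξ‖ := by
          have : (n : ℝ) * ‖η'‖ ≤ n * c⁻¹ :=
            mul_le_mul_of_nonneg_left hηb (Nat.cast_nonneg n)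
          exact mul_le_mul_of_nonneg_right this (norm_nonneg ξ)
  exact le_csSup hbdd ⟨η, hη1, rfl⟩

end RoydenAux

section RoydenAux2

variable {m n : ℕ}

/-- The dual metric is positive for `ξ ≠ 0`. -/
lemma dualMetric_pos {U : Set (Fin m → ℂ)} {G : (Fin m → ℂ) × (Fin n → ℂ) → ℝ}
    (hGcont : ContinuousOn G (U ×ˢ (Set.univ : Set (Fin n → ℂ))))
    (hGpos : ∀ x ∈ U, IsPositiveFn fun η => G (x, η))
    (hGhom : ∀ x ∈ U, IsComplexHomogeneous fun η => G (x, η))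
    {x : Fin m → ℂ} (hx : x ∈ U) {ξ : Fin n → ℂ} (hξ : ξ ≠ 0) :
    0 < dualMetric G x ξ := by
  classical
  set ηs : Fin n → ℂ := fun i => (starRingEnd ℂ) (ξ i) with hηs
  have hηsne : ηs ≠ 0 := by
    intro h
    apply hξ
    funext i
    have : (starRingEnd ℂ) (ξ i) = 0 := congrFun h i
    simpa using congrArg (starRingEnd ℂ) this
  set g : ℝ := G (x, ηs) with hg
  have hgpos : 0 < g := hGpos x hx ηs hηsne
  set η₀ : Fin n → ℂ := (↑(g⁻¹) : ℂ) • ηs with hη₀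
  have hG1 : G (x, η₀) = 1 := by
    have := hGhom x hx (↑(g⁻¹) : ℂ) ηs
    simp only at this
    rw [hη₀, this, Complex.norm_real, Real.norm_eq_abs,
      _root_.abs_of_nonneg (inv_nonneg.2 hgpos.le), ← hg, inv_mul_cancel₀ (ne_of_gt hgpos)]
  have hsum : cpair ηs ξ = ↑(∑ i, Complex.normSq (ξ i)) := by
    rw [cpair]
    push_cast
    refine Finset.sum_congr rfl fun i _ => ?_
    rw [hηs]
    exact (Complex.normSq_eq_conj_mul_self).symm
  have hsumpos : 0 < ∑ i, Complex.normSq (ξ i) := by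
    obtain ⟨i, hi⟩ : ∃ i, ξ i ≠ 0 := by
      by_contra h
      push_neg at h
      exact hξ (funext h)
    exact Finset.sum_pos' (fun j _ => Complex.normSq_nonneg _)
      ⟨i, Finset.mem_univ i, Complex.normSq_pos.2 hi⟩
  have hre : (cpair η₀ ξ).re = g⁻¹ * ∑ i, Complex.normSq (ξ i) := by
    rw [hη₀, cpair_smul_left, Complex.re_ofReal_mul, hsum, Complex.ofReal_re]
  have hle : (cpair η₀ ξ).re ≤ dualMetric G x ξ :=
    re_le_dualMetric hGcont hGpos hGhom ⟨ηs, hηsne⟩ hx ξ hG1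
  have : 0 < (cpair η₀ ξ).re := by
    rw [hre]; exact mul_pos (inv_pos.2 hgpos) hsumpos
  linarith

/-- Uniqueness of the supporting functional. -/
lemma supporting_unique {U : Set (Fin m → ℂ)} {G : (Fin m → ℂ) × (Fin n → ℂ) → ℝ}
    (hGcont : ContinuousOn G (U ×ˢ (Set.univ : Set (Fin n → ℂ))))
    (hGpos : ∀ x ∈ U, IsPositiveFn fun η => G (x, η))
    (hGhom : ∀ x ∈ U, IsComplexHomogeneous fun η => G (x, η))
    (hGsc : ∀ x ∈ U, IsStrictlyConvexFn fun η => G (x, η))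
    {x : Fin m → ℂ} (hx : x ∈ U) {ξ : Fin n → ℂ} (hξ : ξ ≠ 0)
    {η₁ η₂ : Fin n → ℂ} (h1 : G (x, η₁) = 1) (h2 : G (x, η₂) = 1)
    (e1 : (cpair η₁ ξ).re = dualMetric G x ξ)
    (e2 : (cpair η₂ ξ).re = dualMetric G x ξ) :
    η₁ = η₂ := by
  by_contra hne
  set F : ℝ := dualMetric G x ξ with hF
  have hFpos : 0 < F := dualMetric_pos hGcont hGpos hGhom hx hξ
  have hex : ∃ ζ : Fin n → ℂ, ζ ≠ 0 := by
    refine ⟨η₁, fun h => ?_⟩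
    rw [h] at h1
    have := G_zero_of_hom (hGhom x hx)
    rw [this] at h1
    norm_num at h1
  have hsum_ne : η₁ + η₂ ≠ 0 := by
    intro h
    have h0 : (cpair (η₁ + η₂) ξ).re = 0 := by rw [h]; simp [cpair]
    rw [cpair_add_left, Complex.add_re, e1, e2] at h0
    linarith
  set s : ℝ := G (x, η₁ + η₂) with hs
  have hspos : 0 < s := hGpos x hx _ hsum_ne
  have hslt : s < 2 := (hGsc x hx).2 η₁ η₂ h1 h2 hne
  set η₃ : Fin n → ℂ := (↑(s⁻¹) : ℂ) • (η₁ + η₂) with hη₃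
  have hG3 : G (x, η₃) = 1 := by
    have := hGhom x hx (↑(s⁻¹) : ℂ) (η₁ + η₂)
    simp only at this
    rw [hη₃, this, Complex.norm_real, Real.norm_eq_abs,
      _root_.abs_of_nonneg (inv_nonneg.2 hspos.le), ← hs, inv_mul_cancel₀ (ne_of_gt hspos)]
  have hre3 : (cpair η₃ ξ).re = s⁻¹ * (F + F) := by
    rw [hη₃, cpair_smul_left, Complex.re_ofReal_mul, cpair_add_left,
      Complex.add_re, e1, e2]
  have hle3 : (cpair η₃ ξ).re ≤ F :=
    re_le_dualMetric hGcont hGpos hGhom hex hx ξ hG3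
  rw [hre3] at hle3
  have hkey : F + F ≤ s * F := by
    have := mul_le_mul_of_nonneg_left hle3 hspos.le
    rwa [← mul_assoc, mul_inv_cancel₀ (ne_of_gt hspos), one_mul] at this
  nlinarith

end RoydenAux2

set_option maxHeartbeats 1600000 in
/-- **Continuity of the supporting functional (established in the proof of Claim 3 of
Royden's criterion).**  If `G : U × ℂⁿ → ℝ` is continuous and each `G (x, ·)` is positive,
convex, complex homogeneous and strictly convex, then any selection
`(x, ξ) ↦ η_{x,ξ}` of the (unique) supporting functional, i.e. any map `η` with
`G (x, η (x, ξ)) = 1` and `F (x, ξ) = Re (η (x, ξ)(ξ))` on `U × (ℂⁿ ∖ {0})`, is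
continuous on `U × (ℂⁿ ∖ {0})`. -/
theorem royden_supporting_functional_continuous {m n : ℕ}
    (U : Set (Fin m → ℂ)) (hU : IsOpen U)
    (G : (Fin m → ℂ) × (Fin n → ℂ) → ℝ)
    (hGcont : ContinuousOn G (U ×ˢ (Set.univ : Set (Fin n → ℂ))))
    (hGpos : ∀ x ∈ U, IsPositiveFn fun η => G (x, η))
    (hGconv : ∀ x ∈ U, IsConvexFn fun η => G (x, η))
    (hGhom : ∀ x ∈ U, IsComplexHomogeneous fun η => G (x, η))
    (hGsc : ∀ x ∈ U, IsStrictlyConvexFn fun η => G (x, η))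
    (η : (Fin m → ℂ) × (Fin n → ℂ) → (Fin n → ℂ))
    (hη : ∀ p ∈ U ×ˢ {ξ : Fin n → ℂ | ξ ≠ 0},
      G (p.1, η p) = 1 ∧ dualMetric G p.1 p.2 = (cpair (η p) p.2).re) :
    ContinuousOn η (U ×ˢ {ξ : Fin n → ℂ | ξ ≠ 0}) := by
  by_cases hex : ∃ ζ : Fin n → ℂ, ζ ≠ 0
  swap
  · push_neg at hex
    have hempty : (U ×ˢ {ξ : Fin n → ℂ | ξ ≠ 0}) = ∅ := by
      ext p
      simp [Set.mem_prod, hex p.2]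
    rw [hempty]
    exact continuousOn_empty _
  set S : Set ((Fin m → ℂ) × (Fin n → ℂ)) := U ×ˢ {ξ : Fin n → ℂ | ξ ≠ 0} with hS
  rintro ⟨x₀, ξ₀⟩ hp₀
  have hx₀ : x₀ ∈ U := hp₀.1
  have hξ₀ : ξ₀ ≠ 0 := hp₀.2
  -- a compact neighborhood K of x₀ inside U
  obtain ⟨r, hr, hball⟩ := Metric.isOpen_iff.mp hU x₀ hx₀
  set K : Set (Fin m → ℂ) := Metric.closedBall x₀ (r / 2) with hK
  have hKU : K ⊆ U := (Metric.closedBall_subset_ball (by linarith)).trans hball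
  have hKcpt : IsCompact K := isCompact_closedBall _ _
  have hKx₀ : x₀ ∈ K := Metric.mem_closedBall_self (by linarith)
  have hKnbhd : K ∈ 𝓝 x₀ := Metric.closedBall_mem_nhds x₀ (by linarith)
  obtain ⟨c, hc, hlow⟩ := exists_lower_bound hGcont hGpos hGhom hKcpt ⟨x₀, hKx₀⟩ hKU hex
  have hηp₀ := hη (x₀, ξ₀) hp₀
  have hηp₀1 : G (x₀, η (x₀, ξ₀)) = 1 := hηp₀.1
  have hηp₀F : dualMetric G x₀ ξ₀ = (cpair (η (x₀, ξ₀)) ξ₀).re := hηp₀.2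
  have hηp₀ne : η (x₀, ξ₀) ≠ 0 := by
    intro h
    rw [h] at hηp₀1
    have h0 : G (x₀, 0) = 0 := G_zero_of_hom (hGhom x₀ hx₀)
    rw [h0] at hηp₀1
    norm_num at hηp₀1
  -- continuity of G at relevant points
  have hGat : ∀ ζ : Fin n → ℂ, ContinuousAt G (x₀, ζ) := fun ζ =>
    hGcont.continuousAt ((hU.prod isOpen_univ).mem_nhds ⟨hx₀, trivial⟩)
  show Tendsto η (𝓝[S] (x₀, ξ₀)) (𝓝 (η (x₀, ξ₀)))
  apply tendsto_of_subseq_tendsto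
  intro u hu
  have hup : Tendsto u atTop (𝓝 (x₀, ξ₀)) := hu.mono_right nhdsWithin_le_nhds
  have hux : Tendsto (fun k => (u k).1) atTop (𝓝 x₀) :=
    (continuous_fst.tendsto _).comp hup
  have huξ : Tendsto (fun k => (u k).2) atTop (𝓝 ξ₀) :=
    (continuous_snd.tendsto _).comp hup
  have huS : ∀ᶠ k in atTop, u k ∈ S := hu.eventually eventually_mem_nhdsWithin
  have huK : ∀ᶠ k in atTop, (u k).1 ∈ K := hux.eventually_mem hKnbhd
  obtain ⟨N, hN⟩ := eventually_atTop.mp (huS.and huK)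
  -- the functionals are eventually in a fixed closed ball
  have hvball : ∀ k : ℕ, η (u (k + N)) ∈ Metric.closedBall (0 : Fin n → ℂ) c⁻¹ := by
    intro k
    have hmem := hN (k + N) (Nat.le_add_left N k)
    have h1 : G ((u (k + N)).1, η (u (k + N))) = 1 := (hη _ hmem.1).1
    have h2 := hlow _ hmem.2 (η (u (k + N)))
    rw [h1] at h2
    rw [Metric.mem_closedBall, dist_zero_right]
    have hcc : c * c⁻¹ = 1 := mul_inv_cancel₀ (ne_of_gt hc)
    nlinarith [norm_nonneg (η (u (k + N)))]
  obtain ⟨ηs, -, φ, hφ, hφt⟩ :=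
    tendsto_subseq_of_bounded Metric.isBounded_closedBall hvball
  set ms : ℕ → ℕ := fun k => φ k + N with hms
  have hmst : Tendsto ms atTop atTop :=
    tendsto_atTop_mono (fun k => Nat.le_add_right (φ k) N) hφ.tendsto_atTop
  set w : ℕ → (Fin m → ℂ) × (Fin n → ℂ) := fun k => u (ms k) with hw
  have hwlim : Tendsto w atTop (𝓝 (x₀, ξ₀)) := hup.comp hmst
  have hwx : Tendsto (fun k => (w k).1) atTop (𝓝 x₀) :=
    (continuous_fst.tendsto _).comp hwlim
  have hwξ : Tendsto (fun k => (w k).2) atTop (𝓝 ξ₀) :=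
    (continuous_snd.tendsto _).comp hwlim
  have hwS : ∀ k, w k ∈ S := fun k => (hN (ms k) (Nat.le_add_left N (φ k))).1
  have hwU : ∀ k, (w k).1 ∈ U := fun k => (hwS k).1
  have hηt : Tendsto (fun k => η (w k)) atTop (𝓝 ηs) := hφt
  -- (A) G (x₀, ηs) = 1
  have hA : G (x₀, ηs) = 1 := by
    have hpair : Tendsto (fun k => ((w k).1, η (w k))) atTop (𝓝 (x₀, ηs)) :=
      hwx.prodMk_nhds hηt
    have hlim : Tendsto (fun k => G ((w k).1, η (w k))) atTop (𝓝 (G (x₀, ηs))) :=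
      ((hGat ηs).tendsto).comp hpair
    have hconst : (fun k => G ((w k).1, η (w k))) = fun _ => (1 : ℝ) :=
      funext fun k => (hη _ (hwS k)).1
    rw [hconst] at hlim
    exact tendsto_nhds_unique hlim tendsto_const_nhds
  -- (B) (cpair ηs ξ₀).re = dualMetric G x₀ ξ₀
  have hrelim : Tendsto (fun k => (cpair (η (w k)) (w k).2).re) atTop
      (𝓝 ((cpair ηs ξ₀).re)) := by
    have hpair : Tendsto (fun k => (η (w k), (w k).2)) atTop (𝓝 (ηs, ξ₀)) :=
      hηt.prodMk_nhds hwξ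
    exact ((Complex.continuous_re.comp continuous_cpair).tendsto _).comp hpair
  have hFw : ∀ k, (cpair (η (w k)) (w k).2).re = dualMetric G (w k).1 (w k).2 :=
    fun k => ((hη _ (hwS k)).2).symm
  have hgk : Tendsto (fun k => G ((w k).1, η (x₀, ξ₀))) atTop (𝓝 1) := by
    have hpair : Tendsto (fun k => ((w k).1, η (x₀, ξ₀))) atTop (𝓝 (x₀, η (x₀, ξ₀))) :=
      hwx.prodMk_nhds tendsto_const_nhds
    have h := ((hGat _).tendsto).comp hpair
    rwa [hηp₀1] at h
  have hgkpos : ∀ k, 0 < G ((w k).1, η (x₀, ξ₀)) :=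
    fun k => hGpos _ (hwU k) _ hηp₀ne
  have hlower : ∀ k, (G ((w k).1, η (x₀, ξ₀)))⁻¹ * (cpair (η (x₀, ξ₀)) (w k).2).re
      ≤ dualMetric G (w k).1 (w k).2 := by
    intro k
    set g := G ((w k).1, η (x₀, ξ₀)) with hg
    have hG1 : G ((w k).1, (↑(g⁻¹) : ℂ) • η (x₀, ξ₀)) = 1 := by
      have h := hGhom _ (hwU k) (↑(g⁻¹) : ℂ) (η (x₀, ξ₀))
      simp only at h
      rw [h, Complex.norm_real, Real.norm_eq_abs, _root_.abs_of_nonneg (inv_nonneg.2 (hgkpos k).le),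
        ← hg, inv_mul_cancel₀ (ne_of_gt (hgkpos k))]
    have h := re_le_dualMetric hGcont hGpos hGhom hex (hwU k) (w k).2 hG1
    rwa [cpair_smul_left, Complex.re_ofReal_mul] at h
  have hlowlim : Tendsto
      (fun k => (G ((w k).1, η (x₀, ξ₀)))⁻¹ * (cpair (η (x₀, ξ₀)) (w k).2).re)
      atTop (𝓝 (dualMetric G x₀ ξ₀)) := by
    have h1 : Tendsto (fun k => (G ((w k).1, η (x₀, ξ₀)))⁻¹) atTop (𝓝 1) := by
      have h := hgk.inv₀ one_ne_zero
      simpa using h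
    have h2 : Tendsto (fun k => (cpair (η (x₀, ξ₀)) (w k).2).re) atTop
        (𝓝 ((cpair (η (x₀, ξ₀)) ξ₀).re)) := by
      have hpair : Tendsto (fun k => (η (x₀, ξ₀), (w k).2)) atTop
          (𝓝 (η (x₀, ξ₀), ξ₀)) := tendsto_const_nhds.prodMk_nhds hwξ
      exact ((Complex.continuous_re.comp continuous_cpair).tendsto _).comp hpair
    have h := h1.mul h2
    rwa [one_mul, ← hηp₀F] at h
  have hge : dualMetric G x₀ ξ₀ ≤ (cpair ηs ξ₀).re := by
    refine le_of_tendsto_of_tendsto' hlowlim hrelim fun k => ?_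
    rw [hFw k]
    exact hlower k
  have hle : (cpair ηs ξ₀).re ≤ dualMetric G x₀ ξ₀ :=
    re_le_dualMetric hGcont hGpos hGhom hex hx₀ ξ₀ hA
  have hB : (cpair ηs ξ₀).re = dualMetric G x₀ ξ₀ := le_antisymm hle hge
  -- (C) uniqueness
  have hC : ηs = η (x₀, ξ₀) :=
    supporting_unique hGcont hGpos hGhom hGsc hx₀ hξ₀ hA hηp₀1 hB hηp₀F.symm
  exact ⟨ms, hC ▸ hηt⟩
end
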